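/- arXiv:1906.05089 — 7 statements merged into one kernel-verified Lean document; each statement's English description precedes it below -/
import Mathlib

section
/- For every integer n ≥ 2, the upper broadcast domination number of the path P_n equals n − 1, i.e. Γ_b(P_n) = n − 1 = diam(P_n). -/
open SimpleGraph

namespace Broadcast

variable {V : Type*} [Fintype V]

/-- The eccentricity of a vertex: the maximum distance from `v` to any vertex. -/
noncomputable def ecc (G : SimpleGraph V) (v : V) : ℕ :=
  Finset.univ.sup fun u => G.dist v u

/-- A broadcast on `G`: `f v ≤ e_G(v)` for every vertex `v`. -/
def IsBroadcast (G : SimpleGraph V) (f : V → ℕ) : Prop :=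
  ∀ v, f v ≤ ecc G v

/-- The cost of a broadcast. -/
def cost (f : V → ℕ) : ℕ := ∑ v, f v

/-- `hears G f u` is H_f(u): the set of f-broadcast vertices `v` with `d(u,v) ≤ f v`. -/
def hears (G : SimpleGraph V) (f : V → ℕ) (u : V) : Set V :=
  {v | 1 ≤ f v ∧ G.dist u v ≤ f v}

/-- A dominating broadcast: every vertex hears some broadcast vertex. -/
def IsDominating (G : SimpleGraph V) (f : V → ℕ) : Prop :=
  IsBroadcast G f ∧ ∀ u, (hears G f u).Nonempty

/-- A minimal dominating broadcast. -/
def IsMinimalDominating (G : SimpleGraph V) (f : V → ℕ) : Prop :=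
  IsDominating G f ∧ ∀ g, IsDominating G g → (∀ v, g v ≤ f v) → g = f

/-- The broadcast domination number γ_b: minimum cost of a dominating broadcast. -/
noncomputable def broadcastDomination (G : SimpleGraph V) : ℕ :=
  sInf {c | ∃ f, IsDominating G f ∧ cost f = c}

/-- The upper broadcast domination number Γ_b: maximum cost of a minimal dominating broadcast. -/
noncomputable def upperBroadcastDomination (G : SimpleGraph V) : ℕ :=
  sSup {c | ∃ f, IsMinimalDominating G f ∧ cost f = c}

/-- The private f-neighborhood PN_f(v): vertices hearing only `v`. -/
def privateNbhd (G : SimpleGraph V) (f : V → ℕ) (v : V) : Set V :=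
  {u | hears G f u = {v}}

open Classical in
/-- The private f-border PB_f(v). -/
noncomputable def privateBorder (G : SimpleGraph V) (f : V → ℕ) (v : V) : Set V :=
  if f v = 1 ∧ privateNbhd G f v = {v} then {v}
  else {u | u ∈ privateNbhd G f v ∧ G.dist u v = f v}

/-- An irredundant broadcast: every broadcast vertex has a nonempty private border. -/
def IsIrredundant (G : SimpleGraph V) (f : V → ℕ) : Prop :=
  IsBroadcast G f ∧ ∀ v, 1 ≤ f v → (privateBorder G f v).Nonempty

/-- A maximal irredundant broadcast. -/
def IsMaximalIrredundant (G : SimpleGraph V) (f : V → ℕ) : Prop :=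
  IsIrredundant G f ∧ ∀ g, IsIrredundant G g → (∀ v, f v ≤ g v) → g = f

/-- The upper broadcast irredundance number IR_b: maximum cost of an irredundant broadcast. -/
noncomputable def upperBroadcastIrredundance (G : SimpleGraph V) : ℕ :=
  sSup {c | ∃ f, IsIrredundant G f ∧ cost f = c}

/-- The broadcast irredundance number ir_b: minimum cost of a maximal irredundant broadcast. -/
noncomputable def broadcastIrredundance (G : SimpleGraph V) : ℕ :=
  sInf {c | ∃ f, IsMaximalIrredundant G f ∧ cost f = c}

/-- An independent broadcast: every broadcast vertex hears only itself, i.e. |H_f(v)| = 1. -/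
def IsIndependent (G : SimpleGraph V) (f : V → ℕ) : Prop :=
  IsBroadcast G f ∧ ∀ v, 1 ≤ f v → hears G f v = {v}

/-- A maximal independent broadcast. -/
def IsMaximalIndependent (G : SimpleGraph V) (f : V → ℕ) : Prop :=
  IsIndependent G f ∧ ∀ g, IsIndependent G g → (∀ v, f v ≤ g v) → g = f

/-- The broadcast independence number β_b: maximum cost of an independent broadcast. -/
noncomputable def broadcastIndependence (G : SimpleGraph V) : ℕ :=
  sSup {c | ∃ f, IsIndependent G f ∧ cost f = c}

/-- The lower broadcast independence number i_b: minimum cost of a maximal independent broadcast. -/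
noncomputable def lowerBroadcastIndependence (G : SimpleGraph V) : ℕ :=
  sInf {c | ∃ f, IsMaximalIndependent G f ∧ cost f = c}

/-- A packing broadcast: every vertex hears at most one broadcast vertex. -/
def IsPacking (G : SimpleGraph V) (f : V → ℕ) : Prop :=
  IsBroadcast G f ∧ ∀ u, (hears G f u).Subsingleton

/-- A maximal packing broadcast. -/
def IsMaximalPacking (G : SimpleGraph V) (f : V → ℕ) : Prop :=
  IsPacking G f ∧ ∀ g, IsPacking G g → (∀ v, f v ≤ g v) → g = f

/-- The broadcast packing number P_b: maximum cost of a packing broadcast. -/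
noncomputable def broadcastPacking (G : SimpleGraph V) : ℕ :=
  sSup {c | ∃ f, IsPacking G f ∧ cost f = c}

/-- The lower broadcast packing number p_b: minimum cost of a maximal packing broadcast. -/
noncomputable def lowerBroadcastPacking (G : SimpleGraph V) : ℕ :=
  sInf {c | ∃ f, IsMaximalPacking G f ∧ cost f = c}

end Broadcast


open SimpleGraph

private lemma walk_len_ge {n : ℕ} {i j : Fin n} (w : (pathGraph n).Walk i j) :
    (max (i:ℕ) j - min (i:ℕ) j) ≤ w.length := by
  induction w with
  | nil => simp
  | cons h p ih =>
    rw [pathGraph_adj] at h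
    simp only [Walk.length_cons]
    omega

private lemma exists_walk_delta {n : ℕ} : ∀ (k : ℕ) (i j : Fin n), (i:ℕ) + k = j →
    ∃ w : (pathGraph n).Walk i j, w.length = k := by
  intro k
  induction k with
  | zero =>
    intro i j h
    have : i = j := Fin.ext (by omega)
    subst this
    exact ⟨Walk.nil, rfl⟩
  | succ k ih =>
    intro i j h
    have hi1 : (i:ℕ) + 1 < n := by have := j.isLt; omega
    let i' : Fin n := ⟨(i:ℕ) + 1, hi1⟩
    have hadj : (pathGraph n).Adj i i' := by rw [pathGraph_adj]; left; rfl
    obtain ⟨w, hw⟩ := ih i' j (by simp [i']; omega)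
    exact ⟨Walk.cons hadj w, by simp [hw]⟩

private lemma pathGraph_dist_aux {n : ℕ} (i j : Fin n) (hle : (i:ℕ) ≤ j) :
    (pathGraph n).dist i j = (j:ℕ) - i := by
  obtain ⟨w, hw⟩ := exists_walk_delta ((j:ℕ) - i) i j (by omega)
  have h1 := SimpleGraph.dist_le w
  obtain ⟨w', hw'⟩ := SimpleGraph.Reachable.exists_walk_length_eq_dist
    (⟨w⟩ : (pathGraph n).Reachable i j)
  have h2 := walk_len_ge w'
  omega

private lemma pathGraph_dist {n : ℕ} (i j : Fin n) :
    (pathGraph n).dist i j = max (i:ℕ) j - min (i:ℕ) j := by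
  rcases le_total (i:ℕ) (j:ℕ) with hle | hle
  · rw [pathGraph_dist_aux i j hle]; omega
  · rw [SimpleGraph.dist_comm, pathGraph_dist_aux j i hle]; omega

open Broadcast SimpleGraph in
private lemma cost_le_of_minimal {n : ℕ} (hn : 2 ≤ n) (f : Fin n → ℕ)
    (hf : IsMinimalDominating (SimpleGraph.pathGraph n) f) : cost f ≤ n - 1 := by
  classical
  obtain ⟨⟨hbc, hdom⟩, hmin⟩ := hf
  have key : ∀ v : Fin n, f v ≠ 0 → ∃ u : Fin n,
      hears (pathGraph n) f u = {v} ∧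
      ((pathGraph n).dist u v = f v ∨ (u = v ∧ f v = 1)) := by
    intro v hv
    set g := Function.update f v (f v - 1) with hg
    have hgv : g v = f v - 1 := by simp [hg]
    have hgw : ∀ w, w ≠ v → g w = f w := by intro w hw; simp [hg, hw]
    have hgle : ∀ w, g w ≤ f w := by
      intro w
      by_cases h : w = v
      · subst h; omega
      · rw [hgw w h]
    have hgne : g ≠ f := by
      intro h
      have := congrFun h v
      omega
    have hgnd : ¬ IsDominating (pathGraph n) g := fun h => hgne (hmin g h hgle)
    have hgbc : IsBroadcast (pathGraph n) g := fun w => le_trans (hgle w) (hbc w)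
    rw [IsDominating] at hgnd
    push_neg at hgnd
    obtain ⟨u, hu⟩ := hgnd hgbc
    have hsub : ∀ w, w ∈ hears (pathGraph n) f u → w = v := by
      intro w hw
      by_contra hne
      have : w ∈ hears (pathGraph n) g u := by
        obtain ⟨h1, h2⟩ := hw
        exact ⟨by rw [hgw w hne]; exact h1, by rw [hgw w hne]; exact h2⟩
      rw [hu] at this
      exact this
    obtain ⟨w, hw⟩ := hdom u
    have hwv := hsub w hw
    rw [hwv] at hw
    have hvnot : v ∉ hears (pathGraph n) g u := by rw [hu]; exact Set.notMem_empty _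
    obtain ⟨hd1, hd2⟩ := hw
    have hw : v ∈ hears (pathGraph n) f u := ⟨hd1, hd2⟩
    refine ⟨u, Set.eq_singleton_iff_unique_mem.mpr ⟨hw, hsub⟩, ?_⟩
    rw [hears, Set.mem_setOf_eq, hgv, not_and_or] at hvnot
    by_cases hfv1 : f v = 1
    · by_cases hdz : (pathGraph n).dist u v = 0
      · right
        refine ⟨?_, hfv1⟩
        rw [pathGraph_dist] at hdz
        exact Fin.ext (by omega)
      · left; omega
    · left; omega
  choose! u husp using key
  set B : Finset (Fin n) := Finset.univ.filter (fun v => f v ≠ 0) with hB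
  have hBmem : ∀ v, v ∈ B ↔ f v ≠ 0 := by
    intro v; simp [hB]
  set I : Fin n → Finset ℕ := fun v =>
    if u v = v then (if (v:ℕ) + 1 < n then {(v:ℕ)} else {(v:ℕ) - 1})
    else Finset.Ico (min ((u v : ℕ)) ((v:ℕ))) (max ((u v : ℕ)) ((v:ℕ))) with hI
  -- cards
  have hcard : ∀ v ∈ B, (I v).card = f v := by
    intro v hv
    rw [hBmem] at hv
    obtain ⟨hh, hsh⟩ := husp v hv
    by_cases huv : u v = v
    · have hfv1 : f v = 1 := by
        rcases hsh with h | h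
        · rw [huv, pathGraph_dist] at h; omega
        · exact h.2
      simp only [hI, huv, if_pos rfl]
      by_cases hlt : (v:ℕ) + 1 < n <;> simp [hlt, hfv1]
    · have hd : (pathGraph n).dist (u v) v = f v := by
        rcases hsh with h | h
        · exact h
        · exact absurd h.1 huv
      rw [pathGraph_dist] at hd
      simp only [hI, if_neg huv, Nat.card_Ico]
      omega
  -- subset of range (n-1)
  have hsubr : ∀ v ∈ B, I v ⊆ Finset.range (n - 1) := by
    intro v hv e he
    have h1 := v.isLt
    have h2 := (u v).isLt
    rw [Finset.mem_range]
    by_cases huv : u v = v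
    · simp only [hI, huv, if_pos rfl] at he
      by_cases hlt : (v:ℕ) + 1 < n <;> simp [hlt] at he <;> omega
    · simp only [hI, if_neg huv, Finset.mem_Ico] at he
      omega
  -- disjointness
  have hdisj : ∀ v ∈ B, ∀ w ∈ B, v ≠ w → Disjoint (I v) (I w) := by
    intro v hv w hw hvw
    rw [hBmem] at hv hw
    obtain ⟨hhv, hshv⟩ := husp v hv
    obtain ⟨hhw, hshw⟩ := husp w hw
    have F1 : f w < (pathGraph n).dist (u v) w := by
      by_contra hle
      push_neg at hle
      have : w ∈ hears (pathGraph n) f (u v) := ⟨Nat.one_le_iff_ne_zero.mpr hw, hle⟩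
      rw [hhv, Set.mem_singleton_iff] at this
      exact hvw this.symm
    have F2 : f v < (pathGraph n).dist (u w) v := by
      by_contra hle
      push_neg at hle
      have : v ∈ hears (pathGraph n) f (u w) := ⟨Nat.one_le_iff_ne_zero.mpr hv, hle⟩
      rw [hhw, Set.mem_singleton_iff] at this
      exact hvw this
    rw [pathGraph_dist] at F1 F2
    have hvw' : (v:ℕ) ≠ (w:ℕ) := fun h => hvw (Fin.ext h)
    have b1 := v.isLt
    have b2 := w.isLt
    have b3 := (u v).isLt
    have b4 := (u w).isLt
    rw [Finset.disjoint_left]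
    intro e hev hew
    by_cases huv : u v = v <;> by_cases huw : u w = w
    · have e1 : ((u v : Fin n) : ℕ) = (v:ℕ) := by rw [huv]
      have e2 : ((u w : Fin n) : ℕ) = (w:ℕ) := by rw [huw]
      have hfv1 : f v = 1 := by
        rcases hshv with h | h
        · rw [huv, pathGraph_dist] at h; omega
        · exact h.2
      have hfw1 : f w = 1 := by
        rcases hshw with h | h
        · rw [huw, pathGraph_dist] at h; omega
        · exact h.2
      simp only [hI, huv, huw, if_pos rfl] at hev hew
      by_cases hl1 : (v:ℕ) + 1 < n <;> by_cases hl2 : (w:ℕ) + 1 < n <;>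
        simp [hl1, hl2] at hev hew <;> omega
    · have e1 : ((u v : Fin n) : ℕ) = (v:ℕ) := by rw [huv]
      have hd : (pathGraph n).dist (u w) w = f w := by
        rcases hshw with h | h
        · exact h
        · exact absurd h.1 huw
      rw [pathGraph_dist] at hd
      simp only [hI, huv, huw, if_pos rfl, if_neg huw] at hev hew
      rw [Finset.mem_Ico] at hew
      by_cases hl1 : (v:ℕ) + 1 < n <;> simp [hl1] at hev <;> omega
    · have e2 : ((u w : Fin n) : ℕ) = (w:ℕ) := by rw [huw]
      have hd : (pathGraph n).dist (u v) v = f v := by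
        rcases hshv with h | h
        · exact h
        · exact absurd h.1 huv
      rw [pathGraph_dist] at hd
      simp only [hI, huw, huv, if_pos rfl, if_neg huv] at hev hew
      rw [Finset.mem_Ico] at hev
      by_cases hl2 : (w:ℕ) + 1 < n <;> simp [hl2] at hew <;> omega
    · have hd1 : (pathGraph n).dist (u v) v = f v := by
        rcases hshv with h | h
        · exact h
        · exact absurd h.1 huv
      have hd2 : (pathGraph n).dist (u w) w = f w := by
        rcases hshw with h | h
        · exact h
        · exact absurd h.1 huw
      rw [pathGraph_dist] at hd1 hd2
      simp only [hI, if_neg huv, if_neg huw] at hev hew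
      rw [Finset.mem_Ico] at hev hew
      omega
  -- final computation
  have h1 : cost f = ∑ v ∈ B, f v := by
    rw [cost, hB]
    exact (Finset.sum_filter_ne_zero Finset.univ).symm
  have h2 : ∑ v ∈ B, f v = ∑ v ∈ B, (I v).card :=
    Finset.sum_congr rfl (fun v hv => (hcard v hv).symm)
  have h3 : (B.biUnion I).card = ∑ v ∈ B, (I v).card := Finset.card_biUnion hdisj
  have h4 : B.biUnion I ⊆ Finset.range (n - 1) := Finset.biUnion_subset.mpr hsubr
  have h5 := Finset.card_le_card h4
  rw [Finset.card_range] at h5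
  omega

open Broadcast SimpleGraph in
private lemma witness_minimal {n : ℕ} (hn : 2 ≤ n) :
    ∃ f, IsMinimalDominating (SimpleGraph.pathGraph n) f ∧ cost f = n - 1 := by
  classical
  have h0 : 0 < n := by omega
  have hlast : n - 1 < n := by omega
  set z : Fin n := ⟨0, h0⟩ with hz
  set lst : Fin n := ⟨n - 1, hlast⟩ with hlst
  have hzv : (z:ℕ) = 0 := rfl
  have hlv : (lst:ℕ) = n - 1 := rfl
  set f : Fin n → ℕ := fun v => if v = z then n - 1 else 0 with hf
  have hdistz : ∀ v : Fin n, (pathGraph n).dist v z = (v:ℕ) := by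
    intro v
    rw [pathGraph_dist, hzv]
    omega
  have hbc : IsBroadcast (pathGraph n) f := by
    intro v
    by_cases hvz : v = z
    · have hd : (pathGraph n).dist v lst = n - 1 := by
        rw [pathGraph_dist, hlv]
        have : (v:ℕ) = 0 := by rw [hvz]
        have := lst.isLt
        omega
      have hfle : f v ≤ n - 1 := by by_cases h : v = z <;> simp [hf, h]
      calc f v ≤ n - 1 := hfle
        _ = (pathGraph n).dist v lst := hd.symm
        _ ≤ ecc (pathGraph n) v := Finset.le_sup (Finset.mem_univ lst)
    · simp [hf, hvz]
  have hdom : IsDominating (pathGraph n) f := by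
    refine ⟨hbc, fun v => ⟨z, ?_, ?_⟩⟩
    · simp [hf]; omega
    · have := v.isLt
      rw [hdistz v]
      simp [hf]
      omega
  refine ⟨f, ⟨hdom, ?_⟩, ?_⟩
  · intro g hg hgle
    funext v
    by_cases hvz : v = z
    · obtain ⟨w, hw1, hw2⟩ := hg.2 lst
      have hwz : w = z := by
        by_contra hne
        have := hgle w
        simp [hf, hne] at this
        omega
      rw [hwz, hdistz lst, hlv] at hw2
      have h2 := hgle z
      have h3 : f z = n - 1 := by simp [hf]
      rw [hvz]
      omega
    · have := hgle v
      simp [hf, hvz] at this ⊢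
      omega
  · rw [cost, hf]
    simp [Finset.sum_ite_eq]

open Broadcast in
/-- For every integer n ≥ 2, Γ_b(P_n) = n − 1 = diam(P_n). -/
theorem upperBroadcastDomination_pathGraph (n : ℕ) (hn : 2 ≤ n) :
    upperBroadcastDomination (SimpleGraph.pathGraph n) = n - 1 := by
  obtain ⟨f, hf, hc⟩ := witness_minimal hn
  have hmem : (n - 1) ∈ {c | ∃ f, IsMinimalDominating (SimpleGraph.pathGraph n) f ∧ cost f = c} :=
    ⟨f, hf, hc⟩
  have hub : (n - 1) ∈ upperBounds {c | ∃ f, IsMinimalDominating (SimpleGraph.pathGraph n) f ∧ cost f = c} := by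
    rintro c ⟨g, hg, rfl⟩
    exact cost_le_of_minimal hn g hg
  exact le_antisymm (csSup_le ⟨_, hmem⟩ hub) (le_csSup ⟨_, hub⟩ hmem)
end

section
/- For every integer n ≥ 2, the upper broadcast irredundance number of the path P_n equals n − 1, i.e. IR_b(P_n) = n − 1. -/
open SimpleGraph

namespace BAux

open Broadcast

variable {n : ℕ}

lemma walk_len_ge {u v : Fin n} (p : (pathGraph n).Walk u v) :
    (u.val - v.val) + (v.val - u.val) ≤ p.length := by
  induction p with
  | nil => omega
  | @cons a b c hadj p ih =>
    have h := (pathGraph_adj).mp hadj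
    simp only [Walk.length_cons]
    omega

lemma path_dist_le (hn : 1 ≤ n) :
    ∀ (k : ℕ) (u v : Fin n), (u.val - v.val) + (v.val - u.val) ≤ k →
      (pathGraph n).dist u v ≤ k := by
  have hc : (pathGraph n).Connected := by
    obtain ⟨m, rfl⟩ := Nat.exists_eq_succ_of_ne_zero (by omega : n ≠ 0)
    exact pathGraph_connected m
  intro k
  induction k with
  | zero =>
    intro u v h
    have : u = v := Fin.ext (by omega)
    subst this; simp [SimpleGraph.dist_self]
  | succ k ih =>
    intro u v h
    rcases eq_or_ne u v with rfl | hne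
    · simp [SimpleGraph.dist_self]
    rcases Nat.lt_or_ge u.val v.val with hlt | hge
    · have hw : u.val + 1 < n := by have := v.isLt; omega
      have hadj : (pathGraph n).Adj u ⟨u.val + 1, hw⟩ := pathGraph_adj.mpr (Or.inl rfl)
      have h1 : (pathGraph n).dist u ⟨u.val + 1, hw⟩ ≤ 1 :=
        le_of_eq (dist_eq_one_iff_adj.mpr hadj)
      have h2 : (pathGraph n).dist ⟨u.val + 1, hw⟩ v ≤ k := ih _ v (by simp; omega)
      calc (pathGraph n).dist u v ≤ _ + _ := hc.dist_triangle
        _ ≤ 1 + k := Nat.add_le_add h1 h2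
        _ = k + 1 := by omega
    · have hvu : v.val < u.val := by
        rcases Nat.lt_or_ge v.val u.val with h' | h'
        · exact h'
        · exact absurd (Fin.ext (le_antisymm h' hge)) hne
      have hw : u.val - 1 < n := by have := u.isLt; omega
      have hadj : (pathGraph n).Adj u ⟨u.val - 1, hw⟩ :=
        pathGraph_adj.mpr (Or.inr (by simp; omega))
      have h1 : (pathGraph n).dist u ⟨u.val - 1, hw⟩ ≤ 1 :=
        le_of_eq (dist_eq_one_iff_adj.mpr hadj)
      have h2 : (pathGraph n).dist ⟨u.val - 1, hw⟩ v ≤ k := ih _ v (by simp; omega)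
      calc (pathGraph n).dist u v ≤ _ + _ := hc.dist_triangle
        _ ≤ 1 + k := Nat.add_le_add h1 h2
        _ = k + 1 := by omega

lemma path_dist_eq (hn : 1 ≤ n) (u v : Fin n) :
    (pathGraph n).dist u v = (u.val - v.val) + (v.val - u.val) := by
  have hc : (pathGraph n).Connected := by
    obtain ⟨m, rfl⟩ := Nat.exists_eq_succ_of_ne_zero (by omega : n ≠ 0)
    exact pathGraph_connected m
  refine le_antisymm (path_dist_le hn _ u v le_rfl) ?_
  obtain ⟨p, hp⟩ := (hc u v).exists_walk_length_eq_dist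
  rw [← hp]
  exact walk_len_ge p



lemma hears_iff {f : Fin n → ℕ} {u v : Fin n} :
    v ∈ hears (pathGraph n) f u ↔ 1 ≤ f v ∧ (pathGraph n).dist u v ≤ f v := Iff.rfl

/-- Every irredundant broadcast on the path has cost at most `n - 1`. -/
lemma irr_cost_le (hn : 2 ≤ n) (f : Fin n → ℕ)
    (hf : IsIrredundant (pathGraph n) f) : cost f ≤ n - 1 := by
  classical
  have hn1 : 1 ≤ n := by omega
  obtain ⟨hbr, hpriv⟩ := hf
  have hb : ∀ v : Fin n, ∃ b : Fin n, 1 ≤ f v →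
      (hears (pathGraph n) f b = {v} ∧
        ((b = v ∧ f v = 1) ∨
          ((b.val - v.val) + (v.val - b.val) = f v))) := by
    intro v
    by_cases hv : 1 ≤ f v
    · obtain ⟨b, hbmem⟩ := hpriv v hv
      unfold privateBorder at hbmem
      split_ifs at hbmem with hcond
      · obtain ⟨hf1, hpn⟩ := hcond
        have hbv : b = v := hbmem
        refine ⟨v, fun _ => ⟨?_, Or.inl ⟨rfl, hf1⟩⟩⟩
        have : v ∈ privateNbhd (pathGraph n) f v := by rw [hpn]; rfl
        exact this
      · obtain ⟨hpn, hdist⟩ := hbmem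
        refine ⟨b, fun _ => ⟨hpn, Or.inr ?_⟩⟩
        rw [← path_dist_eq hn1 b v]
        exact hdist
    · exact ⟨v, fun h => absurd h hv⟩
  choose b hb using hb
  set S : Finset (Fin n) := Finset.univ.filter (fun v => 1 ≤ f v) with hS
  have hmemS : ∀ v, v ∈ S ↔ 1 ≤ f v := by
    intro v; simp [hS]
  -- key hearing fact
  have hkey : ∀ v ∈ S, ∀ w ∈ S, w ≠ v →
      f w < ((b v).val - w.val) + (w.val - (b v).val) := by
    intro v hv w hw hwv
    have h1 := (hb v ((hmemS v).mp hv)).1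
    have hw1 := (hmemS w).mp hw
    by_contra hle
    push_neg at hle
    have : w ∈ hears (pathGraph n) f (b v) := by
      refine ⟨hw1, ?_⟩
      rw [path_dist_eq hn1]
      omega
    rw [h1] at this
    exact hwv this
  -- the intervals of edges
  set J : Fin n → Finset ℕ := fun v =>
    if b v = v then {if v.val = 0 then 0 else v.val - 1}
    else Finset.Ico (min v.val (b v).val) (max v.val (b v).val) with hJ
  -- incidence facts for edge indices
  have hJfact : ∀ v ∈ S, ∀ k ∈ J v,
      (b v = v ∧ f v = 1 ∧ ((v.val = 0 ∧ k = 0) ∨ k + 1 = v.val)) ∨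
      (((b v).val - v.val) + (v.val - (b v).val) = f v ∧
        min v.val (b v).val ≤ k ∧ k + 1 ≤ max v.val (b v).val) := by
    intro v hv k hk
    have hv1 := (hmemS v).mp hv
    have h2 := (hb v hv1).2
    simp only [hJ] at hk
    by_cases hbv : b v = v
    · rw [if_pos hbv, Finset.mem_singleton] at hk
      left
      refine ⟨hbv, ?_, ?_⟩
      · rcases h2 with ⟨_, h⟩ | h
        · exact h
        · rw [hbv] at h; omega
      · by_cases h0 : v.val = 0
        · rw [if_pos h0] at hk; exact Or.inl ⟨h0, hk⟩
        · rw [if_neg h0] at hk; right; omega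
    · rw [if_neg hbv, Finset.mem_Ico] at hk
      right
      have h : ((b v).val - v.val) + (v.val - (b v).val) = f v := by
        rcases h2 with ⟨h, _⟩ | h
        · exact absurd h hbv
        · exact h
      exact ⟨h, hk.1, by omega⟩
  -- cardinality
  have hcard : ∀ v ∈ S, (J v).card = f v := by
    intro v hv
    have hv1 := (hmemS v).mp hv
    have h2 := (hb v hv1).2
    simp only [hJ]
    by_cases hbv : b v = v
    · rw [if_pos hbv, Finset.card_singleton]
      rcases h2 with ⟨_, h⟩ | h
      · omega
      · rw [hbv] at h; omega
    · rw [if_neg hbv, Nat.card_Ico]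
      rcases h2 with ⟨h, _⟩ | h
      · exact absurd h hbv
      · omega
  -- range
  have hrange : ∀ v ∈ S, J v ⊆ Finset.range (n - 1) := by
    intro v hv k hk
    have hvn := v.isLt
    have hbn := (b v).isLt
    rcases hJfact v hv k hk with ⟨_, _, h1⟩ | ⟨_, h1, h2⟩ <;>
      (rw [Finset.mem_range]; omega)
  -- disjointness
  have hdisj : ∀ v ∈ S, ∀ w ∈ S, v ≠ w → Disjoint (J v) (J w) := by
    intro v hv w hw hvw
    rw [Finset.disjoint_left]
    intro k hkv hkw
    have hkeyvw := hkey v hv w hw (Ne.symm hvw)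
    have hkeywv := hkey w hw v hv hvw
    rcases hJfact v hv k hkv with ⟨hbv, hfv, hv1⟩ | ⟨hfv, hv1, hv2⟩ <;>
      rcases hJfact w hw k hkw with ⟨hbw, hfw, hw1⟩ | ⟨hfw, hw1, hw2⟩
    · rw [hbv] at hkeyvw; rw [hbw] at hkeywv; omega
    · rw [hbv] at hkeyvw; omega
    · rw [hbw] at hkeywv; omega
    · omega
  -- put it together
  have hsum : cost f = ∑ v ∈ S, f v := by
    unfold cost
    refine (Finset.sum_subset (Finset.filter_subset _ _) ?_).symm
    intro x _ hx
    rw [hmemS] at hx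
    omega
  calc cost f = ∑ v ∈ S, f v := hsum
    _ = ∑ v ∈ S, (J v).card := Finset.sum_congr rfl fun v hv => (hcard v hv).symm
    _ = (S.biUnion J).card := (Finset.card_biUnion hdisj).symm
    _ ≤ (Finset.range (n - 1)).card := by
        refine Finset.card_le_card ?_
        intro k hk
        rw [Finset.mem_biUnion] at hk
        obtain ⟨v, hv, hkv⟩ := hk
        exact hrange v hv hkv
    _ = n - 1 := Finset.card_range _

/-- There is an irredundant broadcast of cost `n - 1` on the path. -/
lemma exists_irr (hn : 2 ≤ n) :
    ∃ f : Fin n → ℕ, IsIrredundant (pathGraph n) f ∧ cost f = n - 1 := by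
  classical
  have hn1 : 1 ≤ n := by omega
  set z : Fin n := ⟨0, by omega⟩ with hz
  set L : Fin n := ⟨n - 1, by omega⟩ with hL
  set f : Fin n → ℕ := fun v => if v = z then n - 1 else 0 with hfdef
  have hfz : f z = n - 1 := by simp [hfdef]
  have hears_all : ∀ u : Fin n, hears (pathGraph n) f u = {z} := by
    intro u
    ext w
    simp only [Set.mem_singleton_iff]
    constructor
    · rintro ⟨h1, _⟩
      by_contra hne
      simp [hfdef, hne] at h1
    · rintro rfl
      refine ⟨by rw [hfz]; omega, ?_⟩
      rw [path_dist_eq hn1, hfz]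
      have := u.isLt
      simp [hz]
      omega
  refine ⟨f, ⟨?_, ?_⟩, ?_⟩
  · -- IsBroadcast
    intro v
    by_cases hv : v = z
    · subst hv
      rw [hfz]
      have hdist : (pathGraph n).dist z L = n - 1 := by
        rw [path_dist_eq hn1]
        simp [hz, hL]
      calc n - 1 = (pathGraph n).dist z L := hdist.symm
        _ ≤ ecc (pathGraph n) z := Finset.le_sup (Finset.mem_univ L)
    · simp [hfdef, hv]
  · -- irredundant
    intro v hv
    have hvz : v = z := by
      by_contra hne
      simp [hfdef, hne] at hv
    have hC : ¬ (f z = 1 ∧ privateNbhd (pathGraph n) f z = {z}) := by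
      rintro ⟨_, hpn⟩
      have hLpn : L ∈ privateNbhd (pathGraph n) f z := hears_all L
      rw [hpn] at hLpn
      have : L = z := hLpn
      have := congrArg Fin.val this
      simp [hL, hz] at this
      omega
    rw [hvz]
    refine ⟨L, ?_⟩
    unfold privateBorder
    rw [if_neg hC]
    refine ⟨hears_all L, ?_⟩
    rw [path_dist_eq hn1, hfz]
    simp [hL, hz]
  · -- cost
    simp [cost, hfdef]

end BAux

open Broadcast in
/-- For every integer n ≥ 2, IR_b(P_n) = n − 1. -/
theorem upperBroadcastIrredundance_pathGraph (n : ℕ) (hn : 2 ≤ n) :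
    upperBroadcastIrredundance (SimpleGraph.pathGraph n) = n - 1 := by
  obtain ⟨f, hf, hc⟩ := BAux.exists_irr hn
  have hmem : (n - 1) ∈ {c | ∃ f, IsIrredundant (SimpleGraph.pathGraph n) f ∧ cost f = c} :=
    ⟨f, hf, hc⟩
  have hub : ∀ c ∈ {c | ∃ f, IsIrredundant (SimpleGraph.pathGraph n) f ∧ cost f = c},
      c ≤ n - 1 := by
    rintro c ⟨g, hg, rfl⟩
    exact BAux.irr_cost_le hn g hg
  unfold upperBroadcastIrredundance
  exact le_antisymm (csSup_le ⟨n - 1, hmem⟩ hub) (le_csSup ⟨n - 1, hub⟩ hmem)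
end

section
/- Let n ≥ 3 and let f be an irredundant broadcast on the cycle C_n whose cost equals the upper broadcast irredundance number IR_b(C_n). If H_f(x_i) = ∅ for some vertex x_i of C_n, then H_f(x_{i−1}) ≠ ∅ and H_f(x_{i+1}) ≠ ∅ (indices taken modulo n). -/
open SimpleGraph

section CycleAux

open SimpleGraph Finset Broadcast

open Fin.NatCast Fin.CommRing

variable {m : ℕ}

private lemma cyc_conn : (SimpleGraph.cycleGraph (m + 3)).Connected :=
  SimpleGraph.cycleGraph_connected (n := m + 2)

private lemma cyc_val_one : (1 : Fin (m + 3)).val = 1 := rfl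

private lemma cyc_ne_add_one (x : Fin (m + 3)) : x ≠ x + 1 := by
  intro h
  have h2 : (1 : Fin (m + 3)) = 0 := by
    have := left_eq_add.mp h
    exact this
  have := congrArg Fin.val h2
  rw [cyc_val_one] at this
  simp at this

private lemma cyc_adj_add_one (x : Fin (m + 3)) :
    (SimpleGraph.cycleGraph (m + 3)).Adj x (x + 1) := by
  rw [SimpleGraph.cycleGraph_adj']
  right
  rw [add_sub_cancel_left, cyc_val_one]

private lemma cyc_dist_adj_le (x : Fin (m + 3)) :
    (SimpleGraph.cycleGraph (m + 3)).dist x (x + 1) ≤ 1 :=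
  (SimpleGraph.dist_eq_one_iff_adj.mpr (cyc_adj_add_one x)).le

private lemma cyc_dist_add_le (x : Fin (m + 3)) (k : ℕ) :
    (SimpleGraph.cycleGraph (m + 3)).dist x (x + (k : Fin (m + 3))) ≤ k := by
  induction k with
  | zero => simp
  | succ k ih =>
    have hstep : ((k + 1 : ℕ) : Fin (m + 3)) = (k : Fin (m + 3)) + 1 := by push_cast; ring
    rw [hstep, ← add_assoc]
    calc (SimpleGraph.cycleGraph (m + 3)).dist x (x + (k : Fin (m + 3)) + 1)
        ≤ (SimpleGraph.cycleGraph (m + 3)).dist x (x + (k : Fin (m + 3))) +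
          (SimpleGraph.cycleGraph (m + 3)).dist (x + (k : Fin (m + 3))) (x + (k : Fin (m + 3)) + 1) :=
          cyc_conn.dist_triangle
      _ ≤ k + 1 := Nat.add_le_add ih (cyc_dist_adj_le _)

private lemma cyc_dist_le_val (u v : Fin (m + 3)) :
    (SimpleGraph.cycleGraph (m + 3)).dist u v ≤ (v - u).val := by
  have h := cyc_dist_add_le u (v - u).val
  rwa [Fin.cast_val_eq_self, add_sub_cancel] at h

private lemma cyc_val_sub_add (x y : Fin (m + 3)) :
    (x - y).val + (y - x).val = 0 ∨ (x - y).val + (y - x).val = m + 3 := by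
  have h : (x - y) + (y - x) = 0 := by ring
  have h2 : ((x - y).val + (y - x).val) % (m + 3) = 0 := by
    have h3 : ((x - y) + (y - x)).val = 0 := by rw [h, Fin.val_zero]
    have h4 := Fin.val_add (x - y) (y - x)
    rw [h3] at h4
    exact h4.symm
  have l1 := (x - y).isLt
  have l2 := (y - x).isLt
  set s := (x - y).val + (y - x).val with hs
  rcases Nat.lt_or_ge s (m + 3) with hlt | hge
  · rw [Nat.mod_eq_of_lt hlt] at h2; omega
  · have h5 : s % (m + 3) = (s - (m + 3)) % (m + 3) := Nat.mod_eq_sub_mod hge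
    have h6 : s - (m + 3) < m + 3 := by omega
    rw [h5, Nat.mod_eq_of_lt h6] at h2
    omega

private lemma cyc_walk_lower {u v : Fin (m + 3)}
    (p : (SimpleGraph.cycleGraph (m + 3)).Walk u v) :
    min (v - u).val (u - v).val ≤ p.length := by
  induction p with
  | nil => simp
  | @cons u w v h p ih =>
    have h' := SimpleGraph.cycleGraph_adj'.mp h
    have hAA := cyc_val_sub_add v u
    have hBB := cyc_val_sub_add v w
    have lA := (v - u).isLt
    have lA' := (u - v).isLt
    have lB := (v - w).isLt
    have lB' := (w - v).isLt
    rcases h' with h1 | h1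
    · -- u - w = 1, so v - w = (v - u) + 1
      have huw : u - w = 1 := Fin.ext (by rw [h1, cyc_val_one])
      have hv : v - w = (v - u) + 1 := by rw [← huw]; ring
      have hval : (v - w).val = ((v - u).val + 1) % (m + 3) := by
        rw [hv, Fin.val_add, cyc_val_one]
      simp only [SimpleGraph.Walk.length_cons]
      have : (v - u).val + 1 < m + 3 ∨ (v - u).val + 1 = m + 3 := by omega
      rcases this with hlt | heq
      · rw [Nat.mod_eq_of_lt hlt] at hval; omega
      · rw [heq, Nat.mod_self] at hval; omega
    · -- w - u = 1, so v - u = (v - w) + 1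
      have hwu : w - u = 1 := Fin.ext (by rw [h1, cyc_val_one])
      have hv : v - u = (v - w) + 1 := by rw [← hwu]; ring
      have hval : (v - u).val = ((v - w).val + 1) % (m + 3) := by
        rw [hv, Fin.val_add, cyc_val_one]
      simp only [SimpleGraph.Walk.length_cons]
      have : (v - w).val + 1 < m + 3 ∨ (v - w).val + 1 = m + 3 := by omega
      rcases this with hlt | heq
      · rw [Nat.mod_eq_of_lt hlt] at hval; omega
      · rw [heq, Nat.mod_self] at hval; omega

private lemma cyc_dist_eq (u v : Fin (m + 3)) :
    (SimpleGraph.cycleGraph (m + 3)).dist u v = min (v - u).val (u - v).val := by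
  refine le_antisymm (le_min (cyc_dist_le_val u v) ?_) ?_
  · rw [SimpleGraph.dist_comm]; exact cyc_dist_le_val v u
  · obtain ⟨p, hp⟩ := (cyc_conn (m := m)).exists_walk_length_eq_dist u v
    rw [← hp]
    exact cyc_walk_lower p

private lemma cyc_dist_le_half (u v : Fin (m + 3)) :
    (SimpleGraph.cycleGraph (m + 3)).dist u v ≤ (m + 3) / 2 := by
  rw [cyc_dist_eq]
  rcases cyc_val_sub_add v u with h | h <;> omega

/-- The single-vertex broadcast of power 1 is irredundant with cost 1. -/
private lemma cyc_chi_mem :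
    (1 : ℕ) ∈ {c | ∃ f, IsIrredundant (SimpleGraph.cycleGraph (m + 3)) f ∧ cost f = c} := by
  classical
  set G := SimpleGraph.cycleGraph (m + 3) with hG
  refine ⟨fun v => if v = 0 then 1 else 0, ⟨?_, ?_⟩, ?_⟩
  · -- broadcast
    intro v
    by_cases hv : v = 0
    · subst hv
      simp only [if_pos rfl]
      have h1 : G.dist 0 (0 + 1) ≤ 1 := cyc_dist_adj_le 0
      have hpos : 0 < G.dist 0 (0 + 1) := cyc_conn.pos_dist_of_ne (cyc_ne_add_one 0)
      calc 1 ≤ G.dist 0 (0 + 1) := hpos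
        _ ≤ ecc G 0 := Finset.le_sup (Finset.mem_univ _)
    · simp [if_neg hv]
  · -- irredundant
    intro v hv
    have hv0 : v = 0 := by by_contra h; simp [if_neg h] at hv
    subst hv0
    have hb : hears G (fun v => if v = 0 then 1 else 0) (0 + 1) = {(0 : Fin (m + 3))} := by
      ext w
      simp only [hears, Set.mem_setOf_eq, Set.mem_singleton_iff]
      constructor
      · rintro ⟨h1, _⟩
        by_contra hw
        simp [if_neg hw] at h1
      · rintro rfl
        refine ⟨by simp, ?_⟩
        simp only [if_pos rfl]
        rw [SimpleGraph.dist_comm]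
        exact cyc_dist_adj_le 0
    have hne : (0 : Fin (m + 3)) + 1 ≠ 0 := fun h => cyc_ne_add_one 0 h.symm
    have hd : G.dist (0 + 1) 0 = 1 := by
      have h1 : G.dist (0 + 1) 0 ≤ 1 := by rw [SimpleGraph.dist_comm]; exact cyc_dist_adj_le 0
      have h2 : 0 < G.dist (0 + 1) 0 := cyc_conn.pos_dist_of_ne hne
      omega
    rw [privateBorder]
    by_cases hcond : (fun v : Fin (m + 3) => if v = 0 then 1 else 0) 0 = 1 ∧
        privateNbhd G (fun v : Fin (m + 3) => if v = 0 then 1 else 0) 0 = {0}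
    · rw [if_pos hcond]; exact ⟨0, rfl⟩
    · rw [if_neg hcond]
      refine ⟨0 + 1, ⟨hb, ?_⟩⟩
      simpa using hd
  · -- cost
    rw [cost]
    rw [Finset.sum_ite_eq' Finset.univ (0 : Fin (m + 3)) (fun _ => 1)]
    simp

/-- The two-adjacent-vertices broadcast of power (n/2 - 1) is irredundant with cost 2*(n/2) - 2. -/
private lemma cyc_pair_mem (hm : 1 ≤ m) :
    (2 * ((m + 3) / 2) - 2 : ℕ) ∈
      {c | ∃ f, IsIrredundant (SimpleGraph.cycleGraph (m + 3)) f ∧ cost f = c} := by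
  classical
  set G := SimpleGraph.cycleGraph (m + 3) with hG
  set M := (m + 3) / 2 with hM
  have hM2 : 2 ≤ M := by omega
  have hMn : M - 1 < m + 3 := by omega
  set g : Fin (m + 3) → ℕ := fun v => if v = 0 ∨ v = 1 then M - 1 else 0 with hg
  -- value computations
  have hcast : ∀ k : ℕ, k < m + 3 → ((k : Fin (m + 3))).val = k := fun k hk => Fin.val_cast_of_lt hk
  have hval_neg : ∀ x : Fin (m + 3), x ≠ 0 → (-x).val = (m + 3) - x.val := by
    intro x hx
    have h := cyc_val_sub_add (0 : Fin (m + 3)) x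
    simp only [zero_sub, sub_zero] at h
    have hxv : x.val ≠ 0 := fun h0 => hx (Fin.ext (by rw [h0, Fin.val_zero]))
    have := (-x).isLt
    omega
  set a : Fin (m + 3) := ((M - 1 : ℕ) : Fin (m + 3)) with ha
  have haval : a.val = M - 1 := hcast _ hMn
  have hane : a ≠ 0 := by
    intro h
    have := congrArg Fin.val h
    rw [haval, Fin.val_zero] at this
    omega
  have hMcn : M < m + 3 := by omega
  have hMcast : ((M : ℕ) : Fin (m + 3)).val = M := hcast _ hMcn
  have hMcast_ne : ((M : ℕ) : Fin (m + 3)) ≠ 0 := by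
    intro h
    have := congrArg Fin.val h
    rw [hMcast, Fin.val_zero] at this
    omega
  have h1a : (1 : Fin (m + 3)) + a = ((M : ℕ) : Fin (m + 3)) := by
    have : ((1 : ℕ) : Fin (m + 3)) + ((M - 1 : ℕ) : Fin (m + 3)) = ((1 + (M - 1) : ℕ) : Fin (m + 3)) := by
      push_cast; ring
    rw [ha, show (1 : Fin (m + 3)) = ((1 : ℕ) : Fin (m + 3)) by push_cast; ring, this]
    congr 1
    omega
  set u₀ : Fin (m + 3) := -a with hu₀
  set u₁ : Fin (m + 3) := ((M : ℕ) : Fin (m + 3)) with hu₁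
  have h01 : (0 : Fin (m + 3)) ≠ 1 := by
    intro h
    have := congrArg Fin.val h
    rw [Fin.val_zero, cyc_val_one] at this
    omega
  -- distances
  have hd00 : G.dist u₀ 0 = M - 1 := by
    rw [hG, cyc_dist_eq]
    have e1 : (0 : Fin (m + 3)) - u₀ = a := by rw [hu₀]; ring
    have e2 : u₀ - 0 = -a := by rw [hu₀]; ring
    rw [e1, e2, haval, hval_neg a hane, haval]
    omega
  have hd01 : G.dist u₀ 1 = M := by
    rw [hG, cyc_dist_eq]
    have e1 : (1 : Fin (m + 3)) - u₀ = ((M : ℕ) : Fin (m + 3)) := by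
      rw [hu₀, sub_neg_eq_add, h1a]
    have e2 : u₀ - 1 = -((M : ℕ) : Fin (m + 3)) := by
      rw [← neg_sub, e1]
    rw [e1, e2, hMcast, hval_neg _ hMcast_ne, hMcast]
    omega
  have hd11 : G.dist u₁ 1 = M - 1 := by
    rw [hG, cyc_dist_eq]
    have e1 : (1 : Fin (m + 3)) - u₁ = -a := by
      rw [← h1a]; ring
    have e2 : u₁ - 1 = a := by
      rw [← h1a]; ring
    rw [e1, e2, haval, hval_neg a hane, haval]
    omega
  have hd10 : G.dist u₁ 0 = M := by
    rw [hG, cyc_dist_eq]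
    have e1 : (0 : Fin (m + 3)) - u₁ = -((M : ℕ) : Fin (m + 3)) := by rw [hu₁]; ring
    have e2 : u₁ - 0 = ((M : ℕ) : Fin (m + 3)) := by rw [hu₁]; ring
    rw [e1, e2, hMcast, hval_neg _ hMcast_ne, hMcast]
    omega
  -- hears sets
  have hears0 : hears G g u₀ = {(0 : Fin (m + 3))} := by
    ext w
    simp only [hears, Set.mem_setOf_eq, Set.mem_singleton_iff]
    constructor
    · rintro ⟨h1, h2⟩
      by_contra hw
      by_cases hw1 : w = 1
      · subst hw1
        rw [show g 1 = M - 1 from if_pos (Or.inr rfl), hd01] at h2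
        omega
      · have : g w = 0 := if_neg (by tauto)
        rw [this] at h1; omega
    · rintro rfl
      refine ⟨?_, ?_⟩
      · rw [show g 0 = M - 1 from if_pos (Or.inl rfl)]; omega
      · rw [show g 0 = M - 1 from if_pos (Or.inl rfl), hd00]
  have hears1 : hears G g u₁ = {(1 : Fin (m + 3))} := by
    ext w
    simp only [hears, Set.mem_setOf_eq, Set.mem_singleton_iff]
    constructor
    · rintro ⟨h1, h2⟩
      by_contra hw
      by_cases hw0 : w = 0
      · subst hw0
        rw [show g 0 = M - 1 from if_pos (Or.inl rfl), hd10] at h2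
        omega
      · have : g w = 0 := if_neg (by tauto)
        rw [this] at h1; omega
    · rintro rfl
      refine ⟨?_, ?_⟩
      · rw [show g 1 = M - 1 from if_pos (Or.inr rfl)]; omega
      · rw [show g 1 = M - 1 from if_pos (Or.inr rfl), hd11]
  refine ⟨g, ⟨?_, ?_⟩, ?_⟩
  · -- broadcast
    intro v
    by_cases hv0 : v = 0
    · subst hv0
      rw [show g 0 = M - 1 from if_pos (Or.inl rfl)]
      calc M - 1 = G.dist u₀ 0 := hd00.symm
        _ = G.dist 0 u₀ := SimpleGraph.dist_comm
        _ ≤ ecc G 0 := Finset.le_sup (Finset.mem_univ _)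
    · by_cases hv1 : v = 1
      · subst hv1
        rw [show g 1 = M - 1 from if_pos (Or.inr rfl)]
        calc M - 1 = G.dist u₁ 1 := hd11.symm
          _ = G.dist 1 u₁ := SimpleGraph.dist_comm
          _ ≤ ecc G 1 := Finset.le_sup (Finset.mem_univ _)
      · rw [show g v = 0 from if_neg (by tauto)]
        omega
  · -- irredundant
    intro v hv
    have hv' : v = 0 ∨ v = 1 := by
      by_contra hcon
      rw [show g v = 0 from if_neg hcon] at hv
      omega
    rcases hv' with rfl | rfl
    · rw [privateBorder]
      by_cases hcond : g 0 = 1 ∧ privateNbhd G g 0 = {0}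
      · rw [if_pos hcond]; exact ⟨0, rfl⟩
      · rw [if_neg hcond]
        refine ⟨u₀, ?_, ?_⟩
        · exact hears0
        · rw [hd00, show g 0 = M - 1 from if_pos (Or.inl rfl)]
    · rw [privateBorder]
      by_cases hcond : g 1 = 1 ∧ privateNbhd G g 1 = {1}
      · rw [if_pos hcond]; exact ⟨1, rfl⟩
      · rw [if_neg hcond]
        refine ⟨u₁, ?_, ?_⟩
        · exact hears1
        · rw [hd11, show g 1 = M - 1 from if_pos (Or.inr rfl)]
  · -- cost
    have hsub : cost g = ∑ v ∈ ({0, 1} : Finset (Fin (m + 3))), g v := by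
      rw [cost]
      refine (Finset.sum_subset (Finset.subset_univ _) ?_).symm
      intro x _ hx
      rw [Finset.mem_insert, Finset.mem_singleton] at hx
      exact if_neg hx
    rw [hsub, Finset.sum_pair h01,
      show g 0 = M - 1 from if_pos (Or.inl rfl),
      show g 1 = M - 1 from if_pos (Or.inr rfl)]
    omega

private lemma cyc_hears_unique {f : Fin (m + 3) → ℕ} {x y c : Fin (m + 3)}
    (h : hears (SimpleGraph.cycleGraph (m + 3)) f x = {y})
    (h1 : 1 ≤ f c) (h2 : (SimpleGraph.cycleGraph (m + 3)).dist x c ≤ f c) : c = y := by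
  have hm : c ∈ hears (SimpleGraph.cycleGraph (m + 3)) f x := ⟨h1, h2⟩
  rw [h] at hm
  exact hm

private lemma cyc_good_set (f : Fin (m + 3) → ℕ)
    (hf : IsIrredundant (SimpleGraph.cycleGraph (m + 3)) f)
    (v : Fin (m + 3)) (hv : 1 ≤ f v) :
    ∃ (U : Finset (Fin (m + 3))) (b : Fin (m + 3)),
      U.card = f v + 1 ∧ hears (SimpleGraph.cycleGraph (m + 3)) f b = {v} ∧
      ((∀ z ∈ U, (SimpleGraph.cycleGraph (m + 3)).dist v z +
          (SimpleGraph.cycleGraph (m + 3)).dist z b ≤ f v)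
        ∨ (f v = 1 ∧ U = {v, v + 1} ∧ b = v)) := by
  classical
  obtain ⟨hbr, hirr⟩ := hf
  have hPB := hirr v hv
  rw [privateBorder] at hPB
  by_cases hcond : f v = 1 ∧ privateNbhd (SimpleGraph.cycleGraph (m + 3)) f v = {v}
  · refine ⟨{v, v + 1}, v, ?_, ?_, Or.inr ⟨hcond.1, rfl, rfl⟩⟩
    · rw [Finset.card_pair (cyc_ne_add_one v), hcond.1]
    · have hvmem : v ∈ privateNbhd (SimpleGraph.cycleGraph (m + 3)) f v := by
        rw [hcond.2]; exact rfl
      exact hvmem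
  · rw [if_neg hcond] at hPB
    obtain ⟨b, hbPN, hbd⟩ := hPB
    obtain ⟨p, hpath, hplen⟩ := (cyc_conn (m := m)).exists_path_of_dist v b
    have hlen : p.length = f v := by
      rw [hplen, SimpleGraph.dist_comm]
      exact hbd
    refine ⟨p.support.toFinset, b, ?_, hbPN, Or.inl ?_⟩
    · rw [List.toFinset_card_of_nodup hpath.support_nodup,
        SimpleGraph.Walk.length_support, hlen]
    · intro z hz
      rw [List.mem_toFinset] at hz
      have hsplit := p.take_spec hz
      have hlen2 : (p.takeUntil z hz).length + (p.dropUntil z hz).length = p.length := by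
        rw [← SimpleGraph.Walk.length_append, hsplit]
      have d1 := SimpleGraph.dist_le (p.takeUntil z hz)
      have d2 := SimpleGraph.dist_le (p.dropUntil z hz)
      omega

private lemma cyc_good_disjoint (f : Fin (m + 3) → ℕ)
    {v w : Fin (m + 3)} (hvw : v ≠ w) (hv : 1 ≤ f v) (hw : 1 ≤ f w)
    {Uv Uw : Finset (Fin (m + 3))} {bv bw : Fin (m + 3)}
    (hbv : hears (SimpleGraph.cycleGraph (m + 3)) f bv = {v})
    (hbw : hears (SimpleGraph.cycleGraph (m + 3)) f bw = {w})
    (hUv : (∀ z ∈ Uv, (SimpleGraph.cycleGraph (m + 3)).dist v z +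
          (SimpleGraph.cycleGraph (m + 3)).dist z bv ≤ f v) ∨
          (f v = 1 ∧ Uv = {v, v + 1} ∧ bv = v))
    (hUw : (∀ z ∈ Uw, (SimpleGraph.cycleGraph (m + 3)).dist w z +
          (SimpleGraph.cycleGraph (m + 3)).dist z bw ≤ f w) ∨
          (f w = 1 ∧ Uw = {w, w + 1} ∧ bw = w)) :
    Disjoint Uv Uw := by
  classical
  rw [Finset.disjoint_left]
  intro z hzv hzw
  rcases hUv with hev | ⟨hfv1, hUv, hbveq⟩ <;> rcases hUw with hew | ⟨hfw1, hUw, hbweq⟩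
  · -- else / else
    have c1 := hev z hzv
    have c2 := hew z hzw
    have h1 : f w < (SimpleGraph.cycleGraph (m + 3)).dist bv w := by
      by_contra hcon
      exact (Ne.symm hvw) (cyc_hears_unique hbv hw (by omega))
    have h2 : f v < (SimpleGraph.cycleGraph (m + 3)).dist bw v := by
      by_contra hcon
      exact hvw (cyc_hears_unique hbw hv (by omega))
    have tri1 : (SimpleGraph.cycleGraph (m + 3)).dist bv w ≤
        (SimpleGraph.cycleGraph (m + 3)).dist bv z +
        (SimpleGraph.cycleGraph (m + 3)).dist z w := cyc_conn.dist_triangle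
    have tri2 : (SimpleGraph.cycleGraph (m + 3)).dist bw v ≤
        (SimpleGraph.cycleGraph (m + 3)).dist bw z +
        (SimpleGraph.cycleGraph (m + 3)).dist z v := cyc_conn.dist_triangle
    rw [SimpleGraph.dist_comm (u := bv) (v := z),
      SimpleGraph.dist_comm (u := z) (v := w)] at tri1
    rw [SimpleGraph.dist_comm (u := bw) (v := z),
      SimpleGraph.dist_comm (u := z) (v := v)] at tri2
    omega
  · -- else v / if w
    rw [hbweq] at hbw
    have c1 := hev z hzv
    rw [hUw, Finset.mem_insert, Finset.mem_singleton] at hzw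
    rcases hzw with hz2 | hz2
    · -- z = w
      refine hvw (cyc_hears_unique hbw hv ?_)
      have hcomm : (SimpleGraph.cycleGraph (m + 3)).dist w v =
          (SimpleGraph.cycleGraph (m + 3)).dist v w := SimpleGraph.dist_comm
      rw [hcomm, ← hz2]
      omega
    · -- z = w + 1
      by_cases ht : (SimpleGraph.cycleGraph (m + 3)).dist z bv = 0
      · have hzbv : z = bv := (SimpleGraph.Connected.dist_eq_zero_iff cyc_conn).mp ht
        refine (Ne.symm hvw) (cyc_hears_unique hbv hw ?_)
        rw [← hzbv, hz2, hfw1]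
        calc (SimpleGraph.cycleGraph (m + 3)).dist (w + 1) w
            = (SimpleGraph.cycleGraph (m + 3)).dist w (w + 1) := SimpleGraph.dist_comm
          _ ≤ 1 := cyc_dist_adj_le w
      · refine hvw (cyc_hears_unique hbw hv ?_)
        have tri : (SimpleGraph.cycleGraph (m + 3)).dist w v ≤
            (SimpleGraph.cycleGraph (m + 3)).dist w z +
            (SimpleGraph.cycleGraph (m + 3)).dist z v := cyc_conn.dist_triangle
        have hadj : (SimpleGraph.cycleGraph (m + 3)).dist w z ≤ 1 := by
          rw [hz2]; exact cyc_dist_adj_le w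
        have hcv : (SimpleGraph.cycleGraph (m + 3)).dist z v =
            (SimpleGraph.cycleGraph (m + 3)).dist v z := SimpleGraph.dist_comm
        omega
  · -- if v / else w
    rw [hbveq] at hbv
    have c2 := hew z hzw
    rw [hUv, Finset.mem_insert, Finset.mem_singleton] at hzv
    rcases hzv with hz1 | hz1
    · -- z = v
      refine (Ne.symm hvw) (cyc_hears_unique hbv hw ?_)
      have hcomm : (SimpleGraph.cycleGraph (m + 3)).dist v w =
          (SimpleGraph.cycleGraph (m + 3)).dist w v := SimpleGraph.dist_comm
      rw [hcomm, ← hz1]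
      have hcomm2 : (SimpleGraph.cycleGraph (m + 3)).dist z w =
          (SimpleGraph.cycleGraph (m + 3)).dist w z := SimpleGraph.dist_comm
      omega
    · -- z = v + 1
      by_cases ht : (SimpleGraph.cycleGraph (m + 3)).dist z bw = 0
      · have hzbw : z = bw := (SimpleGraph.Connected.dist_eq_zero_iff cyc_conn).mp ht
        refine hvw (cyc_hears_unique hbw hv ?_)
        rw [← hzbw, hz1, hfv1]
        calc (SimpleGraph.cycleGraph (m + 3)).dist (v + 1) v
            = (SimpleGraph.cycleGraph (m + 3)).dist v (v + 1) := SimpleGraph.dist_comm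
          _ ≤ 1 := cyc_dist_adj_le v
      · refine (Ne.symm hvw) (cyc_hears_unique hbv hw ?_)
        have tri : (SimpleGraph.cycleGraph (m + 3)).dist v w ≤
            (SimpleGraph.cycleGraph (m + 3)).dist v z +
            (SimpleGraph.cycleGraph (m + 3)).dist z w := cyc_conn.dist_triangle
        have hadj : (SimpleGraph.cycleGraph (m + 3)).dist v z ≤ 1 := by
          rw [hz1]; exact cyc_dist_adj_le v
        have hcw : (SimpleGraph.cycleGraph (m + 3)).dist z w =
            (SimpleGraph.cycleGraph (m + 3)).dist w z := SimpleGraph.dist_comm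
        omega
  · -- if / if
    rw [hbveq] at hbv
    rw [hbweq] at hbw
    rw [hUv, Finset.mem_insert, Finset.mem_singleton] at hzv
    rw [hUw, Finset.mem_insert, Finset.mem_singleton] at hzw
    rcases hzv with hz1 | hz1 <;> rcases hzw with hz2 | hz2
    · exact hvw (hz1.symm.trans hz2)
    · -- v = w + 1
      have heq : v = w + 1 := hz1.symm.trans hz2
      refine hvw (cyc_hears_unique hbw hv ?_)
      rw [hfv1, heq]
      exact cyc_dist_adj_le w
    · -- w = v + 1
      have heq : w = v + 1 := hz2.symm.trans hz1
      refine (Ne.symm hvw) (cyc_hears_unique hbv hw ?_)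
      rw [hfw1, heq]
      exact cyc_dist_adj_le v
    · have heq : v + 1 = w + 1 := hz1.symm.trans hz2
      exact hvw (add_right_cancel heq)

private lemma cyc_cost_filter (f : Fin (m + 3) → ℕ) :
    cost f = ∑ v ∈ Finset.univ.filter (fun v => 1 ≤ f v), f v := by
  classical
  rw [cost]
  exact (Finset.sum_filter_of_ne (fun x _ hx => by omega)).symm

private lemma cyc_pair_bound (f : Fin (m + 3) → ℕ)
    (hf : IsIrredundant (SimpleGraph.cycleGraph (m + 3)) f)
    (j : Fin (m + 3)) (hj : hears (SimpleGraph.cycleGraph (m + 3)) f j = ∅)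
    (hj1 : hears (SimpleGraph.cycleGraph (m + 3)) f (j + 1) = ∅) :
    cost f + (Finset.univ.filter (fun v => 1 ≤ f v)).card ≤ m + 1 := by
  classical
  have H : ∀ v : Fin (m + 3), ∃ (U : Finset (Fin (m + 3))) (b : Fin (m + 3)),
      1 ≤ f v → (U.card = f v + 1 ∧ hears (SimpleGraph.cycleGraph (m + 3)) f b = {v} ∧
      ((∀ z ∈ U, (SimpleGraph.cycleGraph (m + 3)).dist v z + (SimpleGraph.cycleGraph (m + 3)).dist z b ≤ f v)
        ∨ (f v = 1 ∧ U = {v, v + 1} ∧ b = v))) := by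
    intro v
    by_cases hv : 1 ≤ f v
    · obtain ⟨U, b, h1, h2, h3⟩ := cyc_good_set f hf v hv
      exact ⟨U, b, fun _ => ⟨h1, h2, h3⟩⟩
    · exact ⟨∅, 0, fun h => absurd h hv⟩
  choose U b hUb using H
  set s := Finset.univ.filter (fun v : Fin (m + 3) => 1 ≤ f v) with hs
  have hmem : ∀ v ∈ s, 1 ≤ f v := by
    intro v hvs
    rw [hs, Finset.mem_filter] at hvs
    exact hvs.2
  have hdisj : ∀ x ∈ s, ∀ y ∈ s, x ≠ y → Disjoint (U x) (U y) := by
    intro x hx y hy hxy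
    have hx' := hUb x (hmem x hx)
    have hy' := hUb y (hmem y hy)
    exact cyc_good_disjoint f hxy (hmem x hx) (hmem y hy) hx'.2.1 hy'.2.1 hx'.2.2 hy'.2.2
  have hhear : ∀ v ∈ s, ∀ z ∈ U v, v ∈ hears (SimpleGraph.cycleGraph (m + 3)) f z := by
    intro v hvs z hz
    have h' := hUb v (hmem v hvs)
    rcases h'.2.2 with hel | ⟨hf1, hUv, _⟩
    · have := hel z hz
      refine ⟨hmem v hvs, ?_⟩
      rw [SimpleGraph.dist_comm]
      omega
    · rw [hUv, Finset.mem_insert, Finset.mem_singleton] at hz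
      rcases hz with hz1 | hz1
      · refine ⟨hmem v hvs, ?_⟩
        rw [hz1, SimpleGraph.dist_self]
        omega
      · refine ⟨hmem v hvs, ?_⟩
        rw [hz1, hf1]
        calc (SimpleGraph.cycleGraph (m + 3)).dist (v + 1) v
            = (SimpleGraph.cycleGraph (m + 3)).dist v (v + 1) := SimpleGraph.dist_comm
          _ ≤ 1 := cyc_dist_adj_le v
  have hsub : s.biUnion U ⊆ Finset.univ \ {j, j + 1} := by
    intro z hz
    rw [Finset.mem_biUnion] at hz
    obtain ⟨v, hvs, hzU⟩ := hz
    rw [Finset.mem_sdiff]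
    refine ⟨Finset.mem_univ _, ?_⟩
    intro hcon
    rw [Finset.mem_insert, Finset.mem_singleton] at hcon
    have hzv := hhear v hvs z hzU
    rcases hcon with rfl | rfl
    · rw [hj] at hzv; exact hzv
    · rw [hj1] at hzv; exact hzv
  have hcard : ∑ v ∈ s, (U v).card = (s.biUnion U).card := (Finset.card_biUnion hdisj).symm
  have h2 : (s.biUnion U).card ≤ (Finset.univ \ ({j, j + 1} : Finset (Fin (m + 3)))).card :=
    Finset.card_le_card hsub
  have h3 : (Finset.univ \ ({j, j + 1} : Finset (Fin (m + 3)))).card = m + 1 := by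
    rw [Finset.card_sdiff_of_subset (Finset.subset_univ _), Finset.card_pair (cyc_ne_add_one j)]
    simp
  have h4 : ∑ v ∈ s, (U v).card = ∑ v ∈ s, (f v + 1) :=
    Finset.sum_congr rfl fun v hvs => (hUb v (hmem v hvs)).1
  have h5 : ∑ v ∈ s, (f v + 1) = (∑ v ∈ s, f v) + s.card := by
    rw [Finset.sum_add_distrib, Finset.sum_const, smul_eq_mul, mul_one]
  have h6 := cyc_cost_filter f
  rw [← hs] at h6
  omega

private lemma cyc_no_silent_pair (f : Fin (m + 3) → ℕ)
    (hf : IsIrredundant (SimpleGraph.cycleGraph (m + 3)) f)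
    (hopt : cost f = upperBroadcastIrredundance (SimpleGraph.cycleGraph (m + 3)))
    (j : Fin (m + 3)) (hj : hears (SimpleGraph.cycleGraph (m + 3)) f j = ∅)
    (hj1 : hears (SimpleGraph.cycleGraph (m + 3)) f (j + 1) = ∅) : False := by
  classical
  set S := {c | ∃ g, IsIrredundant (SimpleGraph.cycleGraph (m + 3)) g ∧ cost g = c} with hS
  have hBdd : BddAbove S := by
    refine ⟨(m + 3) * (m + 3), ?_⟩
    rintro c ⟨g, hg, rfl⟩
    have hgb : ∀ v, g v ≤ m + 3 := by
      intro v
      refine (hg.1 v).trans ?_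
      rw [ecc]
      refine Finset.sup_le fun u _ => ?_
      have h1 := cyc_dist_le_val v u
      have := (u - v).isLt
      omega
    calc cost g = ∑ v, g v := rfl
      _ ≤ Finset.univ.card • (m + 3) := Finset.sum_le_card_nsmul _ _ _ (fun x _ => hgb x)
      _ = (m + 3) * (m + 3) := by simp [mul_comm]
  have hopt' : cost f = sSup S := hopt
  have hb := cyc_pair_bound f hf j hj hj1
  set s := Finset.univ.filter (fun v : Fin (m + 3) => 1 ≤ f v) with hs
  have h6 := cyc_cost_filter f
  rw [← hs] at h6
  by_cases hk : s.card = 0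
  · have hsempty : s = ∅ := Finset.card_eq_zero.mp hk
    have hc0 : cost f = 0 := by rw [h6, hsempty, Finset.sum_empty]
    have h1le : 1 ≤ sSup S := le_csSup hBdd cyc_chi_mem
    omega
  · have hbound : ∀ a ∈ s, f a < (m + 3) / 2 ∧ 1 ≤ f a := by
      intro a ha
      have hfa : 1 ≤ f a := by
        rw [hs, Finset.mem_filter] at ha
        exact ha.2
      have hnot : a ∉ hears (SimpleGraph.cycleGraph (m + 3)) f j := by rw [hj]; exact id
      have hd : f a < (SimpleGraph.cycleGraph (m + 3)).dist j a := by
        by_contra hcon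
        exact hnot ⟨hfa, by omega⟩
      have hhalf := cyc_dist_le_half j a
      exact ⟨by omega, hfa⟩
    obtain ⟨v₁, hv₁⟩ := Finset.card_pos.mp (Nat.pos_of_ne_zero hk)
    have hM2 : 2 ≤ (m + 3) / 2 := by
      have h1 := hbound v₁ hv₁
      omega
    have hm1 : 1 ≤ m := by omega
    have hle2 : 2 * ((m + 3) / 2) - 2 ≤ sSup S := le_csSup hBdd (cyc_pair_mem hm1)
    by_cases hk1 : s.card = 1
    · obtain ⟨a, ha⟩ := Finset.card_eq_one.mp hk1
      have hamem : a ∈ s := by rw [ha]; exact Finset.mem_singleton_self a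
      have hcosta : cost f = f a := by rw [h6, ha, Finset.sum_singleton]
      have h1 := hbound a hamem
      omega
    · have hk2 : 2 ≤ s.card := by omega
      omega

end CycleAux

open Broadcast in
/-- If f is an IR_b-broadcast on C_n and H_f(x_i) = ∅, then
H_f(x_{i-1}) ≠ ∅ and H_f(x_{i+1}) ≠ ∅. -/
theorem hears_ne_empty_of_optimal_irredundant_cycleGraph (n : ℕ) (hn : 3 ≤ n)
    (f : Fin n → ℕ) (hf : IsIrredundant (SimpleGraph.cycleGraph n) f)
    (hopt : cost f = upperBroadcastIrredundance (SimpleGraph.cycleGraph n))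
    (i : Fin n) (hi : hears (SimpleGraph.cycleGraph n) f i = ∅) :
    hears (SimpleGraph.cycleGraph n) f (i - ⟨1, by omega⟩) ≠ ∅ ∧
    hears (SimpleGraph.cycleGraph n) f (i + ⟨1, by omega⟩) ≠ ∅ := by
  obtain ⟨m, rfl⟩ : ∃ m, n = m + 3 := ⟨n - 3, by omega⟩
  have hone : (⟨1, by omega⟩ : Fin (m + 3)) = 1 := by
    apply Fin.ext
    rw [cyc_val_one]
  rw [hone]
  constructor
  · intro hcon
    refine cyc_no_silent_pair f hf hopt (i - 1) hcon ?_
    rw [sub_add_cancel]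
    exact hi
  · intro hcon
    exact cyc_no_silent_pair f hf hopt i hi hcon
end

section
/- For every integer n ≥ 3, the upper broadcast irredundance number of the cycle C_n equals its upper broadcast domination number, i.e. IR_b(C_n) = Γ_b(C_n). -/
open SimpleGraph

namespace Broadcast
variable {V : Type*} [Fintype V]
theorem IsMinimalDominating.isIrredundant {G : SimpleGraph V} (hc : G.Connected)
    {f : V → ℕ} (h : IsMinimalDominating G f) : IsIrredundant G f := by
  classical
  refine ⟨h.1.1, fun v hv => ?_⟩
  by_contra hemp
  rw [Set.not_nonempty_iff_eq_empty] at hemp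
  have hns : ¬(f v = 1 ∧ privateNbhd G f v = {v}) := by
    intro hsp
    rw [privateBorder, if_pos hsp] at hemp
    exact Set.singleton_ne_empty v hemp
  rw [privateBorder, if_neg hns] at hemp
  set g : V → ℕ := Function.update f v (f v - 1) with hg
  have hgle : ∀ w, g w ≤ f w := by
    intro w
    by_cases hw : w = v <;> simp [hg, Function.update, hw]
  have hgdom : IsDominating G g := by
    constructor
    · exact fun w => le_trans (hgle w) (h.1.1 w)
    · intro u
      obtain ⟨w, hw⟩ := h.1.2 u
      by_cases hother : ∃ w', w' ∈ hears G f u ∧ w' ≠ v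
      · obtain ⟨w', hw', hne⟩ := hother
        exact ⟨w', by rw [hg, Function.update_of_ne hne]; exact hw'.1,
               by rw [hg, Function.update_of_ne hne]; exact hw'.2⟩
      · push_neg at hother
        have hwv : w = v := hother w hw
        have hvh : v ∈ hears G f u := hwv ▸ hw
        have hPN : u ∈ privateNbhd G f v := by
          rw [privateNbhd, Set.mem_setOf_eq]
          ext w'
          simp only [Set.mem_singleton_iff]
          exact ⟨fun hmem => hother w' hmem, fun h' => h' ▸ hvh⟩
        have hdne : G.dist u v ≠ f v := by
          intro hd
          have : u ∈ {u | u ∈ privateNbhd G f v ∧ G.dist u v = f v} := ⟨hPN, hd⟩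
          rw [hemp] at this
          exact this
        have hdlt : G.dist u v ≤ f v - 1 := by
          have := hvh.2
          omega
        by_cases hf1 : f v = 1
        · exfalso
          have hdu : G.dist u v = 0 := by omega
          have huv : u = v := by
            rcases (SimpleGraph.dist_eq_zero_iff_eq_or_not_reachable).1 hdu with h' | h'
            · exact h'
            · exact absurd (hc.preconnected u v) h'
          apply hns
          refine ⟨hf1, ?_⟩
          apply Set.eq_singleton_iff_unique_mem.mpr
          refine ⟨huv ▸ hPN, fun u' hu' => ?_⟩
          have hdne' : G.dist u' v ≠ f v := by
            intro hd
            have : u' ∈ {x | x ∈ privateNbhd G f v ∧ G.dist x v = f v} := ⟨hu', hd⟩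
            rw [hemp] at this
            exact this
          have hu'h : v ∈ hears G f u' := by
            have : hears G f u' = {v} := hu'
            rw [this]; rfl
          have hdu' : G.dist u' v = 0 := by have := hu'h.2; omega
          rcases (SimpleGraph.dist_eq_zero_iff_eq_or_not_reachable).1 hdu' with h' | h'
          · exact h'
          · exact absurd (hc.preconnected u' v) h'
        · exact ⟨v, by rw [hg, Function.update_self]; omega,
                 by rw [hg, Function.update_self]; exact hdlt⟩
  have := h.2 g hgdom hgle
  have : g v = f v := by rw [this]
  rw [hg, Function.update_self] at this
  omega

end Broadcast

open scoped Fin.NatCast Fin.CommRing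

namespace CycAux
variable {n : ℕ} [NeZero n]
set_option linter.unusedSectionVars false

lemma val_sub' (a b : Fin n) :
    (a - b).val = if b.val ≤ a.val then a.val - b.val else a.val + n - b.val := by
  rw [Fin.sub_def]
  have ha := a.isLt; have hb := b.isLt
  rcases le_or_gt b.val a.val with h | h
  · have : n - b.val + a.val = (a.val - b.val) + n := by omega
    simp only [this, Nat.add_mod_right, if_pos h]
    exact Nat.mod_eq_of_lt (by omega)
  · have hlt : n - b.val + a.val < n := by omega
    simp only [Nat.mod_eq_of_lt hlt, if_neg (not_le.mpr h)]
    omega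

lemma val_sub_symm (a b : Fin n) (h : a ≠ b) : (a - b).val + (b - a).val = n := by
  have : a.val ≠ b.val := fun hh => h (Fin.ext hh)
  have ha := a.isLt; have hb := b.isLt
  rw [val_sub', val_sub']
  split <;> split <;> omega

lemma sub_eq_zero_iff' (a b : Fin n) : a - b = 0 ↔ a = b := sub_eq_zero

lemma val_one3 (hn : 3 ≤ n) : (1 : Fin n).val = 1 := by
  rw [Fin.val_one' n]; exact Nat.mod_eq_of_lt (by omega)

lemma val_add_one (hn : 3 ≤ n) (x : Fin n) :
    (x + 1).val = if x.val + 1 < n then x.val + 1 else 0 := by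
  rw [Fin.val_add_eq_ite, val_one3 hn]
  have := x.isLt
  split <;> split <;> omega

lemma val_sub_one (hn : 3 ≤ n) (x : Fin n) :
    (x - 1).val = if 1 ≤ x.val then x.val - 1 else n - 1 := by
  rw [val_sub', val_one3 hn]
  have := x.isLt
  split <;> omega

/-- cycle metric at ℕ-level -/
def δ (u v : Fin n) : ℕ := min (v - u).val (u - v).val

lemma delta_step (hn : 3 ≤ n) (u v x : Fin n) (hx : x = u + 1 ∨ x = u - 1) :
    δ u v ≤ δ x v + 1 := by
  have haa : u = v → (v - u).val = 0 ∧ (u - v).val = 0 := by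
    rintro rfl; simp
  rcases hx with rfl | rfl
  · have h1 : v - (u + 1) = (v - u) - 1 := by ring
    have h2 : (u + 1) - v = (u - v) + 1 := by ring
    unfold δ
    rw [h1, h2, val_sub_one hn, val_add_one hn]
    rcases eq_or_ne u v with rfl | huv
    · simp only [sub_self, Fin.val_zero]
      have := (0:Fin n).isLt
      split <;> split <;> omega
    · have hsum := val_sub_symm v u (Ne.symm huv)
      have h0 : (v - u) ≠ 0 := fun h => huv ((sub_eq_zero_iff' v u).mp h).symm
      have h0' : (v - u).val ≠ 0 := fun h => h0 (Fin.ext h)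
      have := (v-u).isLt; have := (u-v).isLt
      split <;> split <;> omega
  · have h1 : v - (u - 1) = (v - u) + 1 := by ring
    have h2 : (u - 1) - v = (u - v) - 1 := by ring
    unfold δ
    rw [h1, h2, val_sub_one hn, val_add_one hn]
    rcases eq_or_ne u v with rfl | huv
    · simp only [sub_self, Fin.val_zero]
      have := (0:Fin n).isLt
      split <;> split <;> omega
    · have hsum := val_sub_symm v u (Ne.symm huv)
      have h0 : (u - v) ≠ 0 := fun h => huv ((sub_eq_zero_iff' u v).mp h)
      have h0' : (u - v).val ≠ 0 := fun h => h0 (Fin.ext h)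
      have := (v-u).isLt; have := (u-v).isLt
      split <;> split <;> omega

lemma cyc_conn (hn : 3 ≤ n) : (cycleGraph n).Connected := by
  have : n = (n-1) + 1 := by omega
  rw [this]; exact cycleGraph_connected

lemma dist_add_le (hn : 3 ≤ n) (u : Fin n) (k : ℕ) : (cycleGraph n).dist u (u + k) ≤ k := by
  induction k with
  | zero => simp
  | succ k ih =>
    have hcast : (u + ((k+1 : ℕ) : Fin n)) = (u + k) + 1 := by push_cast; ring
    have hadj : (cycleGraph n).Adj (u + k) ((u + k) + 1) := by
      rw [cycleGraph_adj']
      right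
      rw [add_sub_cancel_left]
      exact val_one3 hn
    rw [hcast]
    calc (cycleGraph n).dist u ((u + k) + 1)
        ≤ (cycleGraph n).dist u (u+k) + (cycleGraph n).dist (u+k) ((u+k)+1) :=
          (cyc_conn hn).dist_triangle
      _ ≤ k + 1 := by
          have := (SimpleGraph.dist_eq_one_iff_adj).2 hadj
          omega

lemma delta_le_walk (hn : 3 ≤ n) {u v : Fin n} (W : (cycleGraph n).Walk u v) :
    δ u v ≤ W.length := by
  induction W with
  | nil => simp [δ]
  | @cons a x v hadj W ih =>
    have hx : x = a + 1 ∨ x = a - 1 := by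
      rw [cycleGraph_adj'] at hadj
      rcases hadj with h | h
      · right
        have : a - x = 1 := Fin.ext (by rw [h, val_one3 hn])
        rw [← this]; ring
      · left
        have : x - a = 1 := Fin.ext (by rw [h, val_one3 hn])
        rw [← this]; ring
    calc δ a v ≤ δ x v + 1 := delta_step hn a v x hx
      _ ≤ W.length + 1 := by omega
      _ = (SimpleGraph.Walk.cons hadj W).length := by simp

lemma dist_eq_delta (hn : 3 ≤ n) (u v : Fin n) : (cycleGraph n).dist u v = δ u v := by
  apply le_antisymm
  · apply le_min
    · have := dist_add_le hn u (v - u).val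
      rwa [Fin.cast_val_eq_self, add_sub_cancel] at this
    · have := dist_add_le hn v (u - v).val
      rw [Fin.cast_val_eq_self, add_sub_cancel] at this
      rw [SimpleGraph.dist_comm]
      exact this
  · obtain ⟨W, hW⟩ := ((cyc_conn hn) u v).exists_walk_length_eq_dist
    calc δ u v ≤ W.length := delta_le_walk hn W
      _ = _ := hW

end CycAux

namespace CycAux
variable {n : ℕ} [NeZero n]
set_option linter.unusedSectionVars false

lemma dist_le_half (hn : 3 ≤ n) (u v : Fin n) : (cycleGraph n).dist u v ≤ n/2 := by
  rw [dist_eq_delta hn]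
  rcases eq_or_ne u v with rfl | h
  · simp [δ]
  · have := val_sub_symm v u (Ne.symm h)
    unfold δ
    omega

lemma dist_add_nat (hn : 3 ≤ n) (x : Fin n) (c : ℕ) (hc : c ≤ n/2) :
    (cycleGraph n).dist x (x + (c : Fin n)) = c := by
  rw [dist_eq_delta hn]
  have h1 : (x + (c : Fin n) - x) = (c : Fin n) := by ring
  have h2 : (x - (x + (c : Fin n))) = 0 - (c : Fin n) := by ring
  have hcv : ((c : Fin n)).val = c := Fin.val_cast_of_lt (by omega)
  unfold δ
  rw [h1, h2, val_sub', hcv, Fin.val_zero]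
  split <;> omega

lemma dist_sub_nat (hn : 3 ≤ n) (x : Fin n) (c : ℕ) (hc : c ≤ n/2) :
    (cycleGraph n).dist x (x - (c : Fin n)) = c := by
  rw [dist_eq_delta hn]
  have h1 : (x - (c : Fin n) - x) = 0 - (c : Fin n) := by ring
  have h2 : (x - (x - (c : Fin n))) = (c : Fin n) := by ring
  have hcv : ((c : Fin n)).val = c := Fin.val_cast_of_lt (by omega)
  unfold δ
  rw [h1, h2, val_sub', hcv, Fin.val_zero]
  split <;> omega

lemma ecc_cycle (hn : 3 ≤ n) (v : Fin n) : Broadcast.ecc (cycleGraph n) v = n/2 := by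
  unfold Broadcast.ecc
  apply le_antisymm
  · exact Finset.sup_le fun u _ => dist_le_half hn v u
  · calc n/2 = (cycleGraph n).dist v (v + ((n/2 : ℕ) : Fin n)) := (dist_add_nat hn v _ le_rfl).symm
      _ ≤ _ := Finset.le_sup (Finset.mem_univ _)

lemma dist_eq_add_or_sub (hn : 3 ≤ n) {u v : Fin n} {d : ℕ}
    (h : (cycleGraph n).dist u v = d) : v = u + (d : Fin n) ∨ v = u - (d : Fin n) := by
  rw [dist_eq_delta hn] at h
  have hd : d < n := by
    have h1 := (v - u).isLt; have h2 := (u - v).isLt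
    unfold δ at h; omega
  unfold δ at h
  rcases le_or_gt (v-u).val (u-v).val with hle | hlt
  · left
    have : (v - u).val = d := by omega
    have : v - u = (d : Fin n) := Fin.ext (by rw [this, Fin.val_cast_of_lt hd])
    rw [← this]; ring
  · right
    have : (u - v).val = d := by omega
    have : u - v = (d : Fin n) := Fin.ext (by rw [this, Fin.val_cast_of_lt hd])
    rw [← this]; ring

end CycAux

namespace CycAux
variable {n : ℕ} [NeZero n]
set_option linter.unusedSectionVars false
set_option maxHeartbeats 1000000

theorem irred_cost_le (hn : 3 ≤ n) (f : Fin n → ℕ)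
    (hf : Broadcast.IsIrredundant (cycleGraph n) f) :
    Broadcast.cost f ≤ max (n/2) (2*(n/2 - 1)) := by
  classical
  set G := cycleGraph n with hG
  set m := n/2 with hm
  have hmn : 2*m ≤ n ∧ n ≤ 2*m + 1 ∧ 1 ≤ m := by omega
  set B := Finset.univ.filter (fun v => 1 ≤ f v) with hB
  have hmemB : ∀ v, v ∈ B ↔ 1 ≤ f v := fun v => by simp [hB]
  have hcost : Broadcast.cost f = ∑ v ∈ B, f v := by
    unfold Broadcast.cost
    rw [hB]
    exact (Finset.sum_filter_of_ne (fun x _ hx => by omega)).symm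
  have hfub : ∀ v ∈ B, f v ≤ m := fun v hv => by
    have := hf.1 v
    rwa [ecc_cycle hn] at this
  set b : Fin n → Fin n :=
    fun v => if h : (Broadcast.privateBorder G f v).Nonempty then h.choose else v with hb
  have hbPB : ∀ v ∈ B, b v ∈ Broadcast.privateBorder G f v := by
    intro v hv
    have h := hf.2 v ((hmemB v).1 hv)
    simp only [hb]
    rw [dif_pos h]
    exact h.choose_spec
  set spec : Fin n → Prop :=
    fun v => f v = 1 ∧ Broadcast.privateNbhd G f v = {v} with hspec
  have hbspec : ∀ v ∈ B, spec v → b v = v := by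
    intro v hv hsv
    have h := hbPB v hv
    rw [Broadcast.privateBorder, if_pos hsv] at h
    exact h
  have hbdist : ∀ v ∈ B, ¬ spec v →
      b v ∈ Broadcast.privateNbhd G f v ∧ G.dist (b v) v = f v := by
    intro v hv hsv
    have h := hbPB v hv
    rw [Broadcast.privateBorder, if_neg hsv] at h
    exact h
  have hHb : ∀ v ∈ B, Broadcast.hears G f (b v) = {v} := by
    intro v hv
    by_cases hsv : spec v
    · have hv' : v ∈ Broadcast.privateNbhd G f v := hsv.2 ▸ Set.mem_singleton v
      rw [hbspec v hv hsv]
      exact hv'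
    · exact (hbdist v hv hsv).1
  have hsep : ∀ v ∈ B, ∀ w ∈ B, w ≠ v → f w + 1 ≤ G.dist (b v) w := by
    intro v hv w hw hne
    by_contra hlt
    push_neg at hlt
    have hwh : w ∈ Broadcast.hears G f (b v) := ⟨(hmemB w).1 hw, by omega⟩
    rw [hHb v hv] at hwh
    exact hne hwh
  set σ : Fin n → ℕ → Fin n :=
    fun v i => if (b v - v).val = f v then v + (i : Fin n) else v - (i : Fin n) with hσ
  have hσdist : ∀ v, ∀ i, i ≤ m → G.dist v (σ v i) = i := by
    intro v i him
    simp only [hσ]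
    split
    · exact dist_add_nat hn v i him
    · exact dist_sub_nat hn v i him
  have hbσ : ∀ v ∈ B, ¬ spec v → b v = σ v (f v) := by
    intro v hv hs
    have hfn : f v < n := by have := hfub v hv; omega
    have hd := (hbdist v hv hs).2
    simp only [hσ]
    split
    · next hcond =>
      have h2 : b v - v = ((f v : ℕ) : Fin n) := Fin.ext (by rw [hcond, Fin.val_cast_of_lt hfn])
      rw [← h2]; ring
    · next hcond =>
      rw [dist_eq_delta hn] at hd
      unfold δ at hd
      have h1 : (v - b v).val = f v := by omega
      have h2 : v - b v = ((f v : ℕ) : Fin n) := Fin.ext (by rw [h1, Fin.val_cast_of_lt hfn])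
      rw [← h2]; ring
  have hσshift : ∀ v, ∀ i j : ℕ, i ≤ j → j ≤ m → G.dist (σ v i) (σ v j) = j - i := by
    intro v i j hij hjm
    have hji : ((j - i : ℕ) : Fin n) = (j : Fin n) - (i : Fin n) := by
      push_cast [Nat.cast_sub hij]
      ring
    simp only [hσ]
    split
    · have hrw : v + (j : Fin n) = (v + (i : Fin n)) + ((j - i : ℕ) : Fin n) := by
        rw [hji]; ring
      rw [hrw]
      exact dist_add_nat hn _ _ (by omega)
    · have hrw : v - (j : Fin n) = (v - (i : Fin n)) - ((j - i : ℕ) : Fin n) := by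
        rw [hji]; ring
      rw [hrw]
      exact dist_sub_nat hn _ _ (by omega)
  set K : Fin n → Finset (Fin n) := fun v => (Finset.Icc 1 (f v)).image (σ v) with hK
  set S : Fin n → Finset (Fin n) := fun v => insert v (K v) with hS
  have hKmem : ∀ v x, x ∈ K v ↔ ∃ i, (1 ≤ i ∧ i ≤ f v) ∧ σ v i = x := by
    intro v x
    simp [hK, Finset.mem_image, Finset.mem_Icc]
  have hvK : ∀ v ∈ B, v ∉ K v := by
    intro v hv hvk
    obtain ⟨i, ⟨hi1, hif⟩, hσi⟩ := (hKmem v v).1 hvk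
    have := hσdist v i (le_trans hif (hfub v hv))
    rw [hσi, SimpleGraph.dist_self] at this
    omega
  have hScard : ∀ v ∈ B, (S v).card = f v + 1 := by
    intro v hv
    have hinj : Set.InjOn (σ v) (Finset.Icc 1 (f v)) := by
      intro i hi j hj hij
      have hi' := Finset.mem_Icc.1 hi
      have hj' := Finset.mem_Icc.1 hj
      have h1 := hσdist v i (le_trans hi'.2 (hfub v hv))
      have h2 := hσdist v j (le_trans hj'.2 (hfub v hv))
      rw [hij] at h1
      omega
    rw [hS]
    rw [Finset.card_insert_of_notMem (hvK v hv), hK]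
    rw [Finset.card_image_of_injOn hinj, Nat.card_Icc]
    omega
  have hspecHears : ∀ v, spec v → Broadcast.hears G f v = {v} := by
    intro v hsv
    have h : v ∈ Broadcast.privateNbhd G f v := hsv.2 ▸ Set.mem_singleton v
    exact h
  have claim1 : ∀ w ∈ B, ∀ v ∈ B, v ∈ K w → False := by
    intro w hw v hv hvK'
    obtain ⟨i, ⟨hi1, hif⟩, hσi⟩ := (hKmem w v).1 hvK'
    have hwv : G.dist w v = i := by rw [← hσi]; exact hσdist w i (le_trans hif (hfub w hw))
    have hvw : v ≠ w := by
      rintro rfl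
      rw [SimpleGraph.dist_self] at hwv
      omega
    by_cases hsv : spec v
    · have hwm : w ∈ Broadcast.hears G f v :=
        ⟨(hmemB w).1 hw, by rw [SimpleGraph.dist_comm, hwv]; omega⟩
      rw [hspecHears v hsv] at hwm
      exact hvw.symm hwm
    · by_cases hsw : spec w
      · have hvm : v ∈ Broadcast.hears G f w := by
          refine ⟨(hmemB v).1 hv, ?_⟩
          rw [hwv]
          have h1 : f w = 1 := hsw.1
          have h2 := (hmemB v).1 hv
          omega
        rw [hspecHears w hsw] at hvm
        exact hvw hvm
      · have h1 : f v + 1 ≤ G.dist (b w) v := hsep w hw v hv hvw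
        have h2 : G.dist (b w) v = f w - i := by
          rw [hbσ w hw hsw, ← hσi, SimpleGraph.dist_comm]
          exact hσshift w i (f w) hif (hfub w hw)
        have h3 : f w + 1 ≤ G.dist (b v) w := hsep v hv w hw hvw.symm
        have h4 : G.dist (b v) w ≤ f v + i := by
          have htri : G.dist (b v) w ≤ G.dist (b v) v + G.dist v w := (cyc_conn hn).dist_triangle
          have hd : G.dist (b v) v = f v := (hbdist v hv hsv).2
          rw [hd, SimpleGraph.dist_comm (u := v) (v := w), hwv] at htri
          exact htri
        omega
  have claim2a : ∀ v ∈ B, ∀ w ∈ B, v ≠ w → spec v → ¬ spec w →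
      ∀ x, x ∈ K v → x ∈ K w → False := by
    intro v hv w hw hvw hsv hsw x hxv hxw
    obtain ⟨i, ⟨hi1, hif⟩, hσi⟩ := (hKmem v x).1 hxv
    obtain ⟨j, ⟨hj1, hjf⟩, hσj⟩ := (hKmem w x).1 hxw
    have hfv1 : f v = 1 := hsv.1
    have hi : i = 1 := by omega
    have hdvx : G.dist v x = 1 := by
      rw [← hσi, hi]
      exact hσdist v 1 (by omega)
    have hdwx : G.dist w x = j := by rw [← hσj]; exact hσdist w j (le_trans hjf (hfub w hw))
    have hsep' : f w + 1 ≤ G.dist v w := by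
      have h := hsep v hv w hw hvw.symm
      rwa [hbspec v hv hsv] at h
    have htri : G.dist v w ≤ G.dist v x + G.dist x w := (cyc_conn hn).dist_triangle
    rw [hdvx, SimpleGraph.dist_comm (u := x) (v := w), hdwx] at htri
    have hjfw : j = f w := by omega
    have hxbw : x = b w := by rw [hbσ w hw hsw, ← hσj, hjfw]
    have hvm : v ∈ Broadcast.hears G f (b w) := by
      refine ⟨(hmemB v).1 hv, ?_⟩
      rw [← hxbw, SimpleGraph.dist_comm, hdvx, hfv1]
    rw [hHb w hw] at hvm
    exact hvw hvm
  have claim2 : ∀ v ∈ B, ∀ w ∈ B, v ≠ w → ∀ x, x ∈ K v → x ∈ K w → False := by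
    intro v hv w hw hvw x hxv hxw
    by_cases hsv : spec v <;> by_cases hsw : spec w
    · obtain ⟨i, ⟨hi1, hif⟩, hσi⟩ := (hKmem v x).1 hxv
      obtain ⟨j, ⟨hj1, hjf⟩, hσj⟩ := (hKmem w x).1 hxw
      have hi : i = 1 := by have := hsv.1; omega
      have hj : j = 1 := by have := hsw.1; omega
      have hcv : ¬ ((b v - v).val = f v) := by
        rw [hbspec v hv hsv, sub_self]
        simp [hsv.1]
      have hcw : ¬ ((b w - w).val = f w) := by
        rw [hbspec w hw hsw, sub_self]
        simp [hsw.1]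
      have hx1 : x = v - 1 := by
        rw [← hσi, hi]
        simp only [hσ, if_neg hcv, Nat.cast_one]
      have hx2 : x = w - 1 := by
        rw [← hσj, hj]
        simp only [hσ, if_neg hcw, Nat.cast_one]
      have hvw1 : v - 1 = w - 1 := by rw [← hx1, ← hx2]
      exact hvw (sub_left_inj.mp hvw1)
    · exact claim2a v hv w hw hvw hsv hsw x hxv hxw
    · exact claim2a w hw v hv hvw.symm hsw hsv x hxw hxv
    · obtain ⟨i, ⟨hi1, hif⟩, hσi⟩ := (hKmem v x).1 hxv
      obtain ⟨j, ⟨hj1, hjf⟩, hσj⟩ := (hKmem w x).1 hxw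
      have hdxv : G.dist x v = i := by
        rw [← hσi, SimpleGraph.dist_comm]
        exact hσdist v i (le_trans hif (hfub v hv))
      have hdxw : G.dist x w = j := by
        rw [← hσj, SimpleGraph.dist_comm]
        exact hσdist w j (le_trans hjf (hfub w hw))
      have hbvx : G.dist (b v) x = f v - i := by
        rw [hbσ v hv hsv, ← hσi, SimpleGraph.dist_comm]
        exact hσshift v i (f v) hif (hfub v hv)
      have hbwx : G.dist (b w) x = f w - j := by
        rw [hbσ w hw hsw, ← hσj, SimpleGraph.dist_comm]
        exact hσshift w j (f w) hjf (hfub w hw)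
      have h1 : f w + 1 ≤ G.dist (b v) w := hsep v hv w hw hvw.symm
      have h2 : f v + 1 ≤ G.dist (b w) v := hsep w hw v hv hvw
      have t1 : G.dist (b v) w ≤ G.dist (b v) x + G.dist x w := (cyc_conn hn).dist_triangle
      have t2 : G.dist (b w) v ≤ G.dist (b w) x + G.dist x v := (cyc_conn hn).dist_triangle
      rw [hbvx, hdxw] at t1
      rw [hbwx, hdxv] at t2
      omega
  have hSdisj : ∀ v ∈ B, ∀ w ∈ B, v ≠ w → Disjoint (S v) (S w) := by
    intro v hv w hw hvw
    rw [Finset.disjoint_left]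
    intro x hxv hxw
    rw [hS] at hxv hxw
    rcases Finset.mem_insert.1 hxv with rfl | hxv'
    · rcases Finset.mem_insert.1 hxw with h | hxw'
      · exact hvw h
      · exact claim1 w hw x hv hxw'
    · rcases Finset.mem_insert.1 hxw with h | hxw'
      · exact claim1 v hv w hw (h ▸ hxv')
      · exact claim2 v hv w hw hvw x hxv' hxw'
  have hcount : ∑ v ∈ B, (f v + 1) ≤ n := by
    calc ∑ v ∈ B, (f v + 1) = ∑ v ∈ B, (S v).card :=
          Finset.sum_congr rfl (fun v hv => (hScard v hv).symm)
      _ = (B.biUnion S).card := (Finset.card_biUnion hSdisj).symm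
      _ ≤ Fintype.card (Fin n) := Finset.card_le_univ _
      _ = n := Fintype.card_fin n
  rcases Nat.lt_or_ge B.card 2 with hc | hc
  · have h01 : B.card = 0 ∨ B.card = 1 := by omega
    rcases h01 with h0 | h1
    · rw [hcost, Finset.card_eq_zero.1 h0, Finset.sum_empty]
      exact Nat.zero_le _
    · obtain ⟨v, hv⟩ := Finset.card_eq_one.1 h1
      rw [hcost, hv, Finset.sum_singleton]
      have : f v ≤ m := hfub v (hv ▸ Finset.mem_singleton_self v)
      exact le_trans this (le_max_left _ _)
  · have hub : ∀ w ∈ B, f w ≤ m - 1 := by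
      intro w hw
      obtain ⟨v, hv, hvw⟩ := Finset.exists_mem_ne (s := B) (by omega) w
      have h1 := hsep v hv w hw hvw.symm
      have h2 := dist_le_half hn (b v) w
      rw [← hG] at h2
      omega
    rcases Nat.lt_or_ge B.card 3 with hc2 | hc3
    · have h2 : B.card = 2 := by omega
      have hs1 : ∑ v ∈ B, f v ≤ ∑ _v ∈ B, (m-1) := Finset.sum_le_sum hub
      rw [Finset.sum_const, h2, smul_eq_mul] at hs1
      rw [hcost]
      refine le_trans ?_ (le_max_right _ _)
      omega
    · have hsum : ∑ v ∈ B, f v + B.card ≤ n := by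
        rw [Finset.sum_add_distrib, Finset.sum_const, smul_eq_mul, mul_one] at hcount
        omega
      rw [hcost]
      refine le_trans ?_ (le_max_right _ _)
      omega

lemma exists_min_dom (hn : 3 ≤ n) :
    ∃ f : Fin n → ℕ, Broadcast.IsMinimalDominating (cycleGraph n) f ∧
      Broadcast.cost f = max (n/2) (2*(n/2 - 1)) := by
  classical
  rcases Nat.eq_or_lt_of_le hn with h3 | h4
  · -- n = 3
    have hn3 : n = 3 := h3.symm
    set f : Fin n → ℕ := fun v => if v = 0 then 1 else 0 with hf
    have hf0 : f 0 = 1 := by simp [hf]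
    have hfv : ∀ v, v ≠ 0 → f v = 0 := fun v hv => by simp [hf, hv]
    refine ⟨f, ⟨⟨?_, ?_⟩, ?_⟩, ?_⟩
    · intro v
      rw [ecc_cycle hn]
      by_cases hv : v = 0
      · rw [hv, hf0]; omega
      · rw [hfv v hv]; omega
    · intro u
      refine ⟨0, ?_, ?_⟩
      · rw [hf0]
      · rw [hf0]
        have := dist_le_half hn u 0
        omega
    · intro g hgdom hgle
      funext v
      by_cases hv : v = 0
      · subst hv
        rw [hf0]
        have h1 : g 0 ≤ 1 := by have := hgle 0; rwa [hf0] at this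
        by_contra hne
        have h0 : g 0 = 0 := by omega
        obtain ⟨w, hw1, _⟩ := hgdom.2 0
        have hw0 : g w = 0 := by
          by_cases hw : w = 0
          · rw [hw]; exact h0
          · have := hgle w; rw [hfv w hw] at this; omega
        omega
      · have := hgle v
        rw [hfv v hv] at this ⊢
        omega
    · unfold Broadcast.cost
      have : ∑ v, f v = 1 := by
        rw [hf]
        rw [Finset.sum_ite_eq' Finset.univ (0 : Fin n) (fun _ => 1)]
        rw [if_pos (Finset.mem_univ _)]
      rw [this, hn3]
      decide
  · -- 4 ≤ n
    set m := n/2 with hm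
    have hm2 : 2 ≤ m := by omega
    set d : ℕ := n - 2*m + 1 with hd
    have hdlt : d < n := by omega
    set D : Fin n := (d : Fin n) with hD
    have hDval : D.val = d := Fin.val_cast_of_lt hdlt
    have hD0 : D ≠ 0 := by
      intro h
      have : D.val = 0 := by rw [h]; rfl
      omega
    set f : Fin n → ℕ := fun v => if v = 0 then m-1 else if v = D then m-1 else 0 with hf
    have hf0 : f 0 = m - 1 := by simp [hf]
    have hfD : f D = m - 1 := by simp [hf, hD0]
    have hfle : ∀ v, f v ≤ m - 1 := by
      intro v
      simp only [hf]
      split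
      · omega
      · split <;> omega
    have hsupp : ∀ v, 1 ≤ f v → v = 0 ∨ v = D := by
      intro v hv
      simp only [hf] at hv
      by_cases h1 : v = 0
      · exact Or.inl h1
      · by_cases h2 : v = D
        · exact Or.inr h2
        · rw [if_neg h1, if_neg h2] at hv; omega
    -- distance computations
    have hdist0 : ∀ u : Fin n, (cycleGraph n).dist u 0 = min (if u.val = 0 then 0 else n - u.val) u.val := by
      intro u
      rw [dist_eq_delta hn]
      unfold δ
      have e1 := val_sub' (0:Fin n) u
      have e2 := val_sub' u (0:Fin n)
      rw [Fin.val_zero] at e1 e2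
      have hu := u.isLt
      split_ifs at e1 e2 ⊢ <;> omega
    have hdistD : ∀ u : Fin n, (cycleGraph n).dist u D =
        min (if u.val ≤ d then d - u.val else d + n - u.val)
            (if d ≤ u.val then u.val - d else u.val + n - d) := by
      intro u
      rw [dist_eq_delta hn]
      unfold δ
      have e1 := val_sub' D u
      have e2 := val_sub' u D
      rw [hDval] at e1 e2
      have hu := u.isLt
      split_ifs at e1 e2 ⊢ <;> omega
    refine ⟨f, ⟨⟨?_, ?_⟩, ?_⟩, ?_⟩
    · intro v
      rw [ecc_cycle hn]
      have := hfle v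
      omega
    · intro u
      have hcases : (cycleGraph n).dist u 0 ≤ m - 1 ∨ (cycleGraph n).dist u D ≤ m - 1 := by
        rw [hdist0, hdistD]
        have hu := u.isLt
        split_ifs <;> omega
      rcases hcases with h | h
      · exact ⟨0, by rw [hf0]; omega, by rw [hf0]; exact h⟩
      · exact ⟨D, by rw [hfD]; omega, by rw [hfD]; exact h⟩
    · intro g hgdom hgle
      have hgsupp : ∀ v, 1 ≤ g v → v = 0 ∨ v = D := fun v hv =>
        hsupp v (le_trans hv (hgle v))
      funext v
      by_cases hv0 : v = 0
      · subst hv0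
        rw [hf0]
        by_contra hne
        have hg0 : g 0 ≤ m - 2 := by have := hgle 0; rw [hf0] at this; omega
        -- witness: U = n - m + 1
        set U : Fin n := ((n - m + 1 : ℕ) : Fin n) with hU
        have hUval : U.val = n - m + 1 := Fin.val_cast_of_lt (by omega)
        obtain ⟨w, hw1, hw2⟩ := hgdom.2 U
        rcases hgsupp w hw1 with rfl | rfl
        · rw [hdist0, hUval] at hw2
          have : ¬ (n - m + 1 = 0) := by omega
          rw [if_neg this] at hw2
          omega
        · rw [hdistD, hUval] at hw2
          have hgD : g D ≤ m - 1 := by have := hgle D; rw [hfD] at this; omega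
          split_ifs at hw2 <;> omega
      · by_cases hvD : v = D
        · subst hvD
          rw [hfD]
          by_contra hne
          have hgD : g D ≤ m - 2 := by have := hgle D; rw [hfD] at this; omega
          set U : Fin n := ((n - m : ℕ) : Fin n) with hU
          have hUval : U.val = n - m := Fin.val_cast_of_lt (by omega)
          obtain ⟨w, hw1, hw2⟩ := hgdom.2 U
          rcases hgsupp w hw1 with rfl | rfl
          · rw [hdist0, hUval] at hw2
            have hg0 : g 0 ≤ m - 1 := by have := hgle 0; rw [hf0] at this; omega
            have : ¬ (n - m = 0) := by omega
            rw [if_neg this] at hw2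
            omega
          · rw [hdistD, hUval] at hw2
            split_ifs at hw2 <;> omega
        · have := hgle v
          simp only [hf, if_neg hv0, if_neg hvD] at this ⊢
          omega
    · unfold Broadcast.cost
      have hsplit : ∀ v : Fin n, f v =
          (if v = 0 then m-1 else 0) + (if v = D then m-1 else 0) := by
        intro v
        simp only [hf]
        by_cases h1 : v = 0
        · subst h1
          rw [if_pos rfl, if_pos rfl, if_neg (Ne.symm hD0)]
          omega
        · rw [if_neg h1, if_neg h1]
          by_cases h2 : v = D <;> simp [h2]
      calc ∑ v, f v = ∑ v : Fin n, ((if v = 0 then m-1 else 0) + (if v = D then m-1 else 0)) :=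
            Finset.sum_congr rfl (fun v _ => hsplit v)
        _ = (m-1) + (m-1) := by
            rw [Finset.sum_add_distrib,
              Finset.sum_ite_eq' Finset.univ (0 : Fin n) (fun _ => m-1),
              Finset.sum_ite_eq' Finset.univ D (fun _ => m-1)]
            rw [if_pos (Finset.mem_univ (0 : Fin n)), if_pos (Finset.mem_univ D)]
        _ = max (n/2) (2*(n/2 - 1)) := by
            rw [← hm]
            omega

end CycAux

open Broadcast in
/-- For every integer n ≥ 3, IR_b(C_n) = Γ_b(C_n). -/
theorem upperBroadcastIrredundance_eq_upperBroadcastDomination_cycleGraph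
    (n : ℕ) (hn : 3 ≤ n) :
    upperBroadcastIrredundance (SimpleGraph.cycleGraph n) =
      upperBroadcastDomination (SimpleGraph.cycleGraph n) := by
  haveI : NeZero n := ⟨by omega⟩
  set K := max (n/2) (2*(n/2 - 1)) with hK
  obtain ⟨f0, hf0, hc0⟩ := CycAux.exists_min_dom (n := n) hn
  set MDset := {c | ∃ f, IsMinimalDominating (SimpleGraph.cycleGraph n) f ∧ cost f = c} with hMDs
  set IRset := {c | ∃ f, IsIrredundant (SimpleGraph.cycleGraph n) f ∧ cost f = c} with hIRs
  have hKmd : K ∈ MDset := ⟨f0, hf0, hc0⟩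
  have hsub : MDset ⊆ IRset := by
    rintro c ⟨f, hf, rfl⟩
    exact ⟨f, hf.isIrredundant (CycAux.cyc_conn hn), rfl⟩
  have hub : ∀ c ∈ IRset, c ≤ K := by
    rintro c ⟨f, hf, rfl⟩
    exact CycAux.irred_cost_le hn f hf
  have hIR : sSup IRset = K :=
    le_antisymm (csSup_le ⟨K, hsub hKmd⟩ hub) (le_csSup ⟨K, hub⟩ (hsub hKmd))
  have hMD : sSup MDset = K :=
    le_antisymm (csSup_le ⟨K, hKmd⟩ (fun c hc => hub c (hsub hc)))
      (le_csSup ⟨K, fun c hc => hub c (hsub hc)⟩ hKmd)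
  show sSup IRset = sSup MDset
  rw [hIR, hMD]
end

section
/- For every integer n ≥ 4, the upper broadcast domination number of the cycle C_n equals 2(⌊n/2⌋ − 1), i.e. Γ_b(C_n) = 2(⌊n/2⌋ − 1). -/
open SimpleGraph

set_option linter.unusedSectionVars false

namespace CycleAux

open scoped Fin.CommRing Fin.NatCast

lemma fin_sub_val {n : ℕ} (a b : Fin n) :
    (a - b).val = if b.val ≤ a.val then a.val - b.val else a.val + n - b.val := by
  have ha := a.isLt; have hb := b.isLt
  rw [Fin.sub_def]
  simp only [Fin.val_mk]
  rcases le_or_gt b.val a.val with h1 | h1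
  · rw [if_pos h1]
    have : n - b.val + a.val = n + (a.val - b.val) := by omega
    rw [this, Nat.add_mod_left, Nat.mod_eq_of_lt (by omega)]
  · rw [if_neg (by omega), Nat.mod_eq_of_lt (by omega)]
    omega

lemma fin_neg_val {n : ℕ} [NeZero n] (a : Fin n) :
    (-a).val = if a.val = 0 then 0 else n - a.val := by
  have h : -a = 0 - a := by ring
  rw [h, fin_sub_val]
  have ha := a.isLt
  simp only [Fin.val_zero]
  rcases Nat.eq_zero_or_pos a.val with h0 | h0
  · simp [h0]
  · have h1 : a.val ≠ 0 := by omega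
    simp [h1] <;> omega

lemma fin_one_val {n : ℕ} [NeZero n] (hn : 2 ≤ n) : (1 : Fin n).val = 1 := by
  rw [Fin.val_one']
  exact Nat.mod_eq_of_lt (by omega)

lemma adj_add_one {n : ℕ} [NeZero n] (hn : 2 ≤ n) (u : Fin n) :
    (cycleGraph n).Adj u (u + 1) := by
  rw [cycleGraph_adj']
  right
  have h : u + 1 - u = 1 := by ring
  rw [h, fin_one_val hn]

lemma dist_add_le {n : ℕ} [NeZero n] (hn : 2 ≤ n) (u : Fin n) (d : ℕ) :
    (cycleGraph n).dist u (u + (d : Fin n)) ≤ d := by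
  induction d with
  | zero => simp
  | succ d ih =>
    obtain ⟨m, hm⟩ : ∃ m, n = m + 1 := ⟨n - 1, by omega⟩
    have hconn : (cycleGraph n).Connected := by subst hm; exact cycleGraph_connected
    have hcast : ((d + 1 : ℕ) : Fin n) = (d : Fin n) + 1 := by push_cast; ring
    have hd1 : (cycleGraph n).dist (u + (d : Fin n)) (u + ((d + 1 : ℕ) : Fin n)) = 1 := by
      rw [dist_eq_one_iff_adj, hcast, ← add_assoc]
      exact adj_add_one hn _
    have := hconn.dist_triangle (u := u) (v := u + (d : Fin n)) (w := u + ((d + 1 : ℕ) : Fin n))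
    omega

lemma dist_le_sub_val {n : ℕ} [NeZero n] (hn : 2 ≤ n) (u v : Fin n) :
    (cycleGraph n).dist u v ≤ (v - u).val := by
  have h := dist_add_le hn u (v - u).val
  rw [Fin.cast_val_eq_self] at h
  have e : u + (v - u) = v := by ring
  rwa [e] at h

lemma min_sub_one {n : ℕ} [NeZero n] (hn : 2 ≤ n) (a : Fin n) :
    min a.val (-a).val ≤ min (a - 1).val (-(a - 1)).val + 1 := by
  have ha := a.isLt
  have h1 : (a - 1).val = if 1 ≤ a.val then a.val - 1 else a.val + n - 1 := by
    rw [fin_sub_val, fin_one_val hn]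
  have h2 := fin_neg_val a
  have h3 := fin_neg_val (a - 1)
  rw [h1] at h3
  rw [h1, h2, h3]
  split_ifs <;> omega

lemma walk_length_ge {n : ℕ} [NeZero n] (hn : 2 ≤ n) {u v : Fin n}
    (w : (cycleGraph n).Walk u v) :
    min (v - u).val (u - v).val ≤ w.length := by
  induction w with
  | nil => simp
  | @cons a x c hadj p ih =>
    rw [Walk.length_cons]
    rw [cycleGraph_adj'] at hadj
    rcases hadj with h | h
    · have he : a - x = 1 := Fin.ext (by rw [fin_one_val hn]; exact h)
      have hx : x = a - 1 := by rw [← he]; ring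
      subst hx
      have e1 : c - (a - 1) = -((a - c) - 1) := by ring
      have e2 : (a - 1) - c = (a - c) - 1 := by ring
      rw [e1, e2] at ih
      have hm := min_sub_one hn (a - c)
      have hc : c - a = -(a - c) := by ring
      rw [hc, min_comm]
      omega
    · have he : x - a = 1 := Fin.ext (by rw [fin_one_val hn]; exact h)
      have hx : x = a + 1 := by rw [← he]; ring
      subst hx
      have e1 : c - (a + 1) = (c - a) - 1 := by ring
      have e2 : (a + 1) - c = -((c - a) - 1) := by ring
      rw [e1, e2] at ih
      have hm := min_sub_one hn (c - a)
      have hc : a - c = -(c - a) := by ring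
      rw [hc]
      omega

lemma cycle_dist {n : ℕ} [NeZero n] (hn : 2 ≤ n) (u v : Fin n) :
    (cycleGraph n).dist u v = min (v - u).val (u - v).val := by
  apply le_antisymm
  · exact le_min (dist_le_sub_val hn u v)
      (by rw [SimpleGraph.dist_comm]; exact dist_le_sub_val hn v u)
  · obtain ⟨m, hm⟩ : ∃ m, n = m + 1 := ⟨n - 1, by omega⟩
    have hconn : (cycleGraph n).Connected := by subst hm; exact cycleGraph_connected
    obtain ⟨w, hw⟩ := hconn.exists_walk_length_eq_dist u v
    rw [← hw]
    exact walk_length_ge hn w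


open Broadcast

variable {V : Type*} [Fintype V] {G : SimpleGraph V} {f : V → ℕ}

lemma exists_prefix_walk {u v : V} (w : G.Walk u v) (i : ℕ) :
    ∃ p : G.Walk u (w.getVert i), p.length ≤ i := by
  induction w generalizing i with
  | nil => exact ⟨(Walk.nil).copy rfl (by simp [Walk.getVert]), by simp⟩
  | @cons a x c hadj p ih =>
    cases i with
    | zero => exact ⟨(Walk.nil).copy rfl (by simp), by simp⟩
    | succ i =>
      obtain ⟨q, hq⟩ := ih i
      exact ⟨(Walk.cons hadj q).copy rfl (by rw [Walk.getVert_cons_succ]),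
        by simpa using Nat.succ_le_succ hq⟩

lemma exists_suffix_walk {u v : V} (w : G.Walk u v) (i : ℕ) :
    ∃ p : G.Walk (w.getVert i) v, p.length ≤ w.length - i := by
  induction w generalizing i with
  | nil => exact ⟨(Walk.nil).copy (by simp [Walk.getVert]) rfl, by simp⟩
  | @cons a x c hadj p ih =>
    cases i with
    | zero =>
      exact ⟨(Walk.cons hadj p).copy (by simp) rfl, by simp⟩
    | succ i =>
      obtain ⟨q, hq⟩ := ih i
      exact ⟨q.copy (by rw [Walk.getVert_cons_succ]) rfl, by simpa using hq⟩

/-- distances along a shortest walk are exact -/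
lemma dist_getVert {u v : V} (w : G.Walk u v) (hw : w.length = G.dist u v)
    (hconn : G.Connected) {i : ℕ} (hi : i ≤ w.length) :
    G.dist u (w.getVert i) = i ∧ G.dist (w.getVert i) v = w.length - i := by
  obtain ⟨p, hp⟩ := exists_prefix_walk w i
  obtain ⟨q, hq⟩ := exists_suffix_walk w i
  have h1 : G.dist u (w.getVert i) ≤ i := le_trans (dist_le p) hp
  have h2 : G.dist (w.getVert i) v ≤ w.length - i := le_trans (dist_le q) hq
  have h3 := hconn.dist_triangle (u := u) (v := w.getVert i) (w := v)
  omega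

lemma witness (hf : IsMinimalDominating G f) (hconn : G.Connected) {v : V} (hv : 1 ≤ f v) :
    ∃ u, hears G f u = {v} ∧ (G.dist u v = f v ∨ (f v = 1 ∧ u = v)) := by
  classical
  set g : V → ℕ := Function.update f v (f v - 1) with hg
  have hgle : ∀ x, g x ≤ f x := by
    intro x; by_cases hx : x = v <;> simp [hg, Function.update, hx]
  have hgne : g ≠ f := by
    intro h
    have := congrFun h v
    simp [hg, Function.update] at this
    omega
  have hgnotdom : ¬ IsDominating G g := fun h => hgne (hf.2 g h hgle)
  have hgbroad : IsBroadcast G g := fun x => le_trans (hgle x) (hf.1.1 x)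
  rw [IsDominating, not_and_or] at hgnotdom
  rcases hgnotdom with h | h
  · exact absurd hgbroad h
  push_neg at h
  obtain ⟨u, hu⟩ := h
  refine ⟨u, ?_, ?_⟩
  · ext w
    simp only [hears, Set.mem_setOf_eq, Set.mem_singleton_iff]
    constructor
    · intro hw
      by_contra hwv
      have : w ∈ hears G g u := by
        simp only [hears, Set.mem_setOf_eq]
        rwa [hg, Function.update_of_ne hwv]
      rw [hu] at this; exact this
    · intro hweq
      rw [hweq]
      obtain ⟨w, hw⟩ := hf.1.2 u
      by_cases hwv : w = v
      · exact hwv ▸ hw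
      · exfalso
        have : w ∈ hears G g u := by
          simp only [hears, Set.mem_setOf_eq] at hw ⊢
          rwa [hg, Function.update_of_ne hwv]
        rw [hu] at this; exact this
  · have hvmem : v ∈ hears G f u := by
      obtain ⟨w, hw⟩ := hf.1.2 u
      by_cases hwv : w = v
      · exact hwv ▸ hw
      · exfalso
        have : w ∈ hears G g u := by
          simp only [hears, Set.mem_setOf_eq] at hw ⊢
          rwa [hg, Function.update_of_ne hwv]
        rw [hu] at this; exact this
    have hnv : v ∉ hears G g u := by rw [hu]; exact Set.notMem_empty _
    simp only [hears, Set.mem_setOf_eq] at hvmem hnv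
    rw [hg, Function.update_self] at hnv
    push_neg at hnv
    by_cases h1 : f v = 1
    · rcases Nat.eq_zero_or_pos (G.dist u v) with hd | hd
      · right
        refine ⟨h1, ?_⟩
        have := G.dist_eq_zero_iff_eq_or_not_reachable (u := u) (v := v)
        rcases this.1 hd with h | h
        · exact h
        · exact absurd (hconn.preconnected u v) h
      · left; omega
    · left
      have := hnv (by omega)
      omega

lemma ecc_dist_le (v u : V) : G.dist v u ≤ ecc G v :=
  Finset.le_sup (Finset.mem_univ u)

lemma power_lt_ecc (hf : IsMinimalDominating G f) (hconn : G.Connected) {v w : V}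
    (hvw : v ≠ w) (hv : 1 ≤ f v) (hw : 1 ≤ f w) : f w < ecc G w := by
  obtain ⟨u, hu, -⟩ := witness hf hconn hv
  by_contra hle
  push_neg at hle
  have : w ∈ hears G f u := by
    refine ⟨hw, le_trans ?_ hle⟩
    rw [SimpleGraph.dist_comm]
    exact ecc_dist_le w u
  rw [hu, Set.mem_singleton_iff] at this
  exact hvw this.symm

lemma sum_card_le (P : Finset V) (S : V → Finset V)
    (hdisj : ∀ v ∈ P, ∀ w ∈ P, v ≠ w → Disjoint (S v) (S w)) :
    ∑ v ∈ P, (S v).card ≤ Fintype.card V := by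
  classical
  rw [← Finset.card_biUnion hdisj]
  exact Finset.card_le_card (Finset.subset_univ _)

lemma fin_sub_add_val {n : ℕ} {a b : Fin n} (hab : a ≠ b) :
    (a - b).val + (b - a).val = n := by
  have ha := a.isLt; have hb := b.isLt
  have hne : a.val ≠ b.val := fun h => hab (Fin.ext h)
  rw [fin_sub_val, fin_sub_val]
  split_ifs <;> omega

lemma ecc_cycle {n : ℕ} [NeZero n] (hn : 2 ≤ n) (v : Fin n) :
    Broadcast.ecc (cycleGraph n) v = n / 2 := by
  apply le_antisymm
  · apply Finset.sup_le
    intro u _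
    rw [cycle_dist hn]
    by_cases huv : u = v
    · subst huv; simp
    · have := fin_sub_add_val (a := u) (b := v) huv
      omega
  · set u : Fin n := v + ⟨n / 2, by omega⟩ with hu
    have h1 : u - v = ⟨n / 2, by omega⟩ := by rw [hu]; ring
    have h2 : (v - u).val = n - n / 2 := by
      have : v - u = -(u - v) := by ring
      rw [this, h1, fin_neg_val]
      rw [if_neg (by simp; omega)]
    have : (cycleGraph n).dist v u = n / 2 := by
      rw [cycle_dist hn, h1, h2]
      simp only [Fin.val_mk]
      omega
    calc (n : ℕ) / 2 = (cycleGraph n).dist v u := this.symm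
      _ ≤ _ := ecc_dist_le v u

lemma self_ne_add_one {n : ℕ} [NeZero n] (hn : 2 ≤ n) (v : Fin n) : v ≠ v + 1 := by
  intro h
  have := congrArg (fun z => z - v) h
  simp only [sub_self] at this
  have h2 : v + 1 - v = 1 := by ring
  rw [h2] at this
  have := congrArg Fin.val this
  rw [fin_one_val hn] at this
  simp at this

lemma cost_add_card_le {n : ℕ} [NeZero n] (hn : 2 ≤ n) {f : Fin n → ℕ}
    (hf : Broadcast.IsMinimalDominating (cycleGraph n) f) :
    Broadcast.cost f + (Finset.univ.filter fun v => 1 ≤ f v).card ≤ n := by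
  classical
  set G := cycleGraph n with hG
  obtain ⟨m, hm⟩ : ∃ m, n = m + 1 := ⟨n - 1, by omega⟩
  have hconn : G.Connected := by rw [hG]; subst hm; exact cycleGraph_connected
  set P : Finset (Fin n) := Finset.univ.filter fun v => 1 ≤ f v with hP
  have hPmem : ∀ v, v ∈ P ↔ 1 ≤ f v := by intro v; simp [hP]
  -- witnesses
  have hex : ∀ v : Fin n, ∃ u, 1 ≤ f v →
      (Broadcast.hears G f u = {v} ∧ (G.dist u v = f v ∨ (f v = 1 ∧ u = v))) := by
    intro v
    by_cases hv : 1 ≤ f v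
    · obtain ⟨u, h1, h2⟩ := witness hf hconn hv
      exact ⟨u, fun _ => ⟨h1, h2⟩⟩
    · exact ⟨v, fun hv' => absurd hv' hv⟩
  choose u hu using hex
  choose W hW using fun v => hconn.exists_walk_length_eq_dist v (u v)
  -- S
  set S : Fin n → Finset (Fin n) := fun v =>
    if G.dist (u v) v = f v then (Finset.range (f v + 1)).image (W v).getVert
    else {v, v + 1} with hS
  have hpriv : ∀ v ∈ P, Broadcast.hears G f (u v) = {v} := by
    intro v hv; exact (hu v ((hPmem v).1 hv)).1
  have hspec : ∀ v ∈ P, ¬ (G.dist (u v) v = f v) → f v = 1 ∧ u v = v := by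
    intro v hv hnd
    rcases (hu v ((hPmem v).1 hv)).2 with h | h
    · exact absurd h hnd
    · exact h
  have hlenW : ∀ v ∈ P, G.dist (u v) v = f v → (W v).length = f v := by
    intro v hv hd
    rw [hW v, SimpleGraph.dist_comm, hd]
  -- membership fact for generic
  have hgenmem : ∀ v ∈ P, G.dist (u v) v = f v → ∀ x ∈ S v,
      G.dist v x + G.dist x (u v) = f v := by
    intro v hv hd x hx
    rw [hS] at hx
    simp only [if_pos hd, Finset.mem_image, Finset.mem_range] at hx
    obtain ⟨i, hi, rfl⟩ := hx
    have hil : i ≤ (W v).length := by rw [hlenW v hv hd]; omega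
    have := dist_getVert (W v) (hW v) hconn hil
    rw [hlenW v hv hd] at this
    omega
  -- ball fact
  have hball : ∀ v ∈ P, ∀ x ∈ S v, G.dist v x ≤ f v := by
    intro v hv x hx
    by_cases hd : G.dist (u v) v = f v
    · have := hgenmem v hv hd x hx
      omega
    · rw [hS] at hx
      simp only [if_neg hd, Finset.mem_insert, Finset.mem_singleton] at hx
      rcases hx with rfl | rfl
      · rw [SimpleGraph.dist_self]
        exact Nat.zero_le _
      · have h2 : G.dist v (v + 1) = 1 := by
          rw [dist_eq_one_iff_adj]; exact adj_add_one hn v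
        rw [h2]
        exact (hPmem v).1 hv
  -- cards
  have hcard : ∀ v ∈ P, (S v).card = f v + 1 := by
    intro v hv
    by_cases hd : G.dist (u v) v = f v
    · rw [hS]
      simp only [if_pos hd]
      rw [Finset.card_image_of_injOn, Finset.card_range]
      intro i hi j hj hij
      simp only [Finset.mem_coe, Finset.mem_range] at hi hj
      have hil : i ≤ (W v).length := by rw [hlenW v hv hd]; omega
      have hjl : j ≤ (W v).length := by rw [hlenW v hv hd]; omega
      have h1 := (dist_getVert (W v) (hW v) hconn hil).1
      have h2 := (dist_getVert (W v) (hW v) hconn hjl).1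
      rw [← h1, ← h2, hij]
    · obtain ⟨hf1, -⟩ := hspec v hv hd
      rw [hS]
      simp only [if_neg hd]
      rw [Finset.card_insert_of_notMem (by simp [self_ne_add_one hn v]),
        Finset.card_singleton, hf1]
  have hadj1 : ∀ v : Fin n, G.dist v (v + 1) = 1 := by
    intro v; rw [dist_eq_one_iff_adj]; exact adj_add_one hn v
  have heq_of_dist0 : ∀ x y : Fin n, G.dist x y = 0 → x = y := by
    intro x y h
    rcases (G.dist_eq_zero_iff_eq_or_not_reachable).1 h with h | h
    · exact h
    · exact absurd (hconn.preconnected x y) h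
  have hdisj : ∀ v ∈ P, ∀ w ∈ P, v ≠ w → Disjoint (S v) (S w) := by
    have hpriv' : ∀ v ∈ P, ∀ w ∈ P, v ≠ w → f w < G.dist (u v) w := by
      intro v hv w hw hvw
      have hnotin : w ∉ Broadcast.hears G f (u v) := by
        rw [hpriv v hv]
        simp [hvw.symm]
      simp only [Broadcast.hears, Set.mem_setOf_eq, not_and, not_le] at hnotin
      exact hnotin ((hPmem w).1 hw)
    -- special v vs any w
    have hspec_case : ∀ v ∈ P, ∀ w ∈ P, v ≠ w → ¬ (G.dist (u v) v = f v) →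
        ∀ x, x ∈ S v → x ∈ S w → False := by
      intro v hv w hw hvw hnd x hxv hxw
      obtain ⟨hfv1, huv⟩ := hspec v hv hnd
      have hbw : G.dist w x ≤ f w := hball w hw x hxw
      have hnw : f w < G.dist v w := by
        have := hpriv' v hv w hw hvw
        rwa [huv] at this
      rw [hS] at hxv
      simp only [if_neg hnd, Finset.mem_insert, Finset.mem_singleton] at hxv
      rcases hxv with rfl | rfl
      · -- x = v
        have : G.dist x w ≤ f w := by rw [SimpleGraph.dist_comm]; exact hbw
        omega
      · -- x = v + 1
        have htri : G.dist v w ≤ G.dist v (v + 1) + G.dist (v + 1) w :=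
          hconn.dist_triangle
        rw [hadj1 v] at htri
        have hcomm : G.dist (v + 1) w = G.dist w (v + 1) := SimpleGraph.dist_comm
        have hwx : G.dist w (v + 1) = f w := by omega
        by_cases hdw : G.dist (u w) w = f w
        · -- w generic
          have hmem := hgenmem w hw hdw (v + 1) hxw
          have hzero : G.dist (v + 1) (u w) = 0 := by omega
          have hxuw : v + 1 = u w := heq_of_dist0 _ _ hzero
          have : v ∈ Broadcast.hears G f (u w) := by
            refine ⟨(hPmem v).1 hv, ?_⟩
            rw [← hxuw]
            have : G.dist (v + 1) v = 1 := by
              rw [SimpleGraph.dist_comm]; exact hadj1 v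
            omega
          rw [hpriv w hw, Set.mem_singleton_iff] at this
          exact hvw this
        · -- w special
          obtain ⟨hfw1, huw⟩ := hspec w hw hdw
          rw [hS] at hxw
          simp only [if_neg hdw, Finset.mem_insert, Finset.mem_singleton] at hxw
          rcases hxw with hx1 | hx1
          · rw [hx1] at hwx
            simp only [SimpleGraph.dist_self] at hwx
            omega
          · have : v = w := by
              have := congrArg (fun z => z - 1) hx1
              simpa using this
            exact hvw this
    intro v hv w hw hvw
    rw [Finset.disjoint_left]
    intro x hxv hxw
    by_cases hdv : G.dist (u v) v = f v
    · by_cases hdw : G.dist (u w) w = f w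
      · -- both generic
        have h1 := hgenmem v hv hdv x hxv
        have h2 := hgenmem w hw hdw x hxw
        have p1 := hpriv' v hv w hw hvw
        have p2 := hpriv' w hw v hv hvw.symm
        have t1 : G.dist (u v) w ≤ G.dist (u v) x + G.dist x w := hconn.dist_triangle
        have t2 : G.dist (u w) v ≤ G.dist (u w) x + G.dist x v := hconn.dist_triangle
        have c1 : G.dist (u v) x = G.dist x (u v) := SimpleGraph.dist_comm
        have c2 : G.dist x w = G.dist w x := SimpleGraph.dist_comm
        have c3 : G.dist (u w) x = G.dist x (u w) := SimpleGraph.dist_comm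
        have c4 : G.dist x v = G.dist v x := SimpleGraph.dist_comm
        omega
      · exact hspec_case w hw v hv hvw.symm hdw x hxw hxv
    · exact hspec_case v hv w hw hvw hdv x hxv hxw
  -- count
  have hsum : ∑ v ∈ P, (f v + 1) ≤ n := by
    calc ∑ v ∈ P, (f v + 1) = ∑ v ∈ P, (S v).card := by
          apply Finset.sum_congr rfl; intro v hv; rw [hcard v hv]
      _ ≤ Fintype.card (Fin n) := sum_card_le P S hdisj
      _ = n := Fintype.card_fin n
  have hcost : Broadcast.cost f = ∑ v ∈ P, f v := by
    show (∑ v, f v) = ∑ v ∈ P, f v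
    rw [← Finset.sum_filter_add_sum_filter_not Finset.univ (fun v => 1 ≤ f v) f]
    have : ∑ v ∈ Finset.univ.filter (fun v => ¬ 1 ≤ f v), f v = 0 := by
      apply Finset.sum_eq_zero
      intro x hx
      simp only [Finset.mem_filter] at hx
      omega
    rw [this]
    simp [hP]
  rw [Finset.sum_add_distrib] at hsum
  have hone : ∑ _v ∈ P, 1 = P.card := by simp
  rw [hcost]
  omega

lemma cost_eq_sum_filter {V : Type*} [Fintype V] (f : V → ℕ) :
    Broadcast.cost f = ∑ v ∈ Finset.univ.filter (fun v => 1 ≤ f v), f v := by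
  classical
  show (∑ v, f v) = _
  rw [← Finset.sum_filter_add_sum_filter_not Finset.univ (fun v => 1 ≤ f v) f]
  have : ∑ v ∈ Finset.univ.filter (fun v => ¬ 1 ≤ f v), f v = 0 := by
    apply Finset.sum_eq_zero
    intro x hx
    simp only [Finset.mem_filter] at hx
    omega
  omega

lemma exists_min_dom {n : ℕ} [NeZero n] (hn4 : 4 ≤ n) :
    ∃ f : Fin n → ℕ, Broadcast.IsMinimalDominating (cycleGraph n) f ∧
      Broadcast.cost f = 2 * (n / 2 - 1) := by
  classical
  have hn : 2 ≤ n := by omega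
  set k := n / 2 with hk
  set r := n % 2 with hr
  have hkr : n = 2 * k + r ∧ r < 2 ∧ 2 ≤ k := by omega
  set j : Fin n := ⟨r + 1, by omega⟩ with hj
  have h0val : (0 : Fin n).val = 0 := rfl
  have h0j : (0 : Fin n) ≠ j := by
    intro h
    have := congrArg Fin.val h
    rw [h0val] at this
    simp [hj] at this
  set f : Fin n → ℕ := fun x => if x = 0 ∨ x = j then k - 1 else 0 with hf
  have hdist : ∀ a b : Fin n, (cycleGraph n).dist a b = min ((b - a).val) ((a - b).val) :=
    cycle_dist hn
  -- distance to 0 and to j, in terms of t = u.val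
  have hd0 : ∀ u : Fin n, (cycleGraph n).dist u 0 =
      min (if u.val = 0 then 0 else n - u.val) u.val := by
    intro u
    rw [hdist]
    have e1 : (0 : Fin n) - u = -u := by ring
    have e2 : u - 0 = u := by ring
    rw [e1, e2, fin_neg_val]
  have hdj : ∀ u : Fin n, (cycleGraph n).dist u j =
      min (if u.val ≤ r + 1 then r + 1 - u.val else r + 1 + n - u.val)
          (if r + 1 ≤ u.val then u.val - (r + 1) else u.val + n - (r + 1)) := by
    intro u
    rw [hdist, fin_sub_val, fin_sub_val]
  have hfpos : 1 ≤ k - 1 := by omega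
  -- dominating
  have hdom : Broadcast.IsDominating (cycleGraph n) f := by
    constructor
    · intro v
      rw [ecc_cycle hn]
      by_cases h : v = 0 ∨ v = j <;> simp [hf, h] <;> omega
    · intro u
      have ht := u.isLt
      by_cases hc : (cycleGraph n).dist u 0 ≤ k - 1
      · exact ⟨0, by simp [Broadcast.hears, hf, h0j, hfpos, hc]⟩
      · refine ⟨j, ?_⟩
        have hd1 := hd0 u
        have hd2 := hdj u
        refine ⟨by simp [hf, hfpos], ?_⟩
        have : f j = k - 1 := by simp [hf]
        rw [this, hd2]
        rw [hd1] at hc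
        split_ifs at hc ⊢ <;> omega
  -- minimality
  refine ⟨f, ⟨hdom, ?_⟩, ?_⟩
  · intro g hg hgle
    by_contra hne
    have hex : ∃ v, g v < f v := by
      by_contra hall
      push_neg at hall
      exact hne (funext fun v => le_antisymm (hgle v) (hall v))
    obtain ⟨v, hv⟩ := hex
    have hvor : v = 0 ∨ v = j := by
      by_contra hnor
      simp [hf, hnor] at hv
    have hg0 : g 0 ≤ k - 1 := le_trans (hgle 0) (by simp [hf])
    have hgj : g j ≤ k - 1 := le_trans (hgle j) (by simp [hf, h0j.symm])
    rcases hvor with rfl | rfl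
    · -- decreased at 0 ; witness z = k + r + 1
      have hv0 : g 0 ≤ k - 2 := by
        have : f 0 = k - 1 := by simp [hf]
        omega
      set z : Fin n := ⟨k + r + 1, by omega⟩ with hz
      obtain ⟨w, hw1, hw2⟩ := hg.2 z
      have hwor : w = 0 ∨ w = j := by
        by_contra hnor
        have := hgle w
        simp [hf, hnor] at this
        omega
      have hzv : z.val = k + r + 1 := rfl
      rcases hwor with rfl | rfl
      · rw [hd0 z, hzv] at hw2
        split_ifs at hw2 <;> first | contradiction | omega
      · rw [hdj z, hzv] at hw2
        split_ifs at hw2 <;> first | contradiction | omega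
    · -- decreased at j ; witness z = k + r
      have hvj : g j ≤ k - 2 := by
        have : f j = k - 1 := by simp [hf]
        omega
      set z : Fin n := ⟨k + r, by omega⟩ with hz
      obtain ⟨w, hw1, hw2⟩ := hg.2 z
      have hwor : w = 0 ∨ w = j := by
        by_contra hnor
        have := hgle w
        simp [hf, hnor] at this
        omega
      have hzv : z.val = k + r := rfl
      rcases hwor with rfl | rfl
      · rw [hd0 z, hzv] at hw2
        split_ifs at hw2 <;> first | contradiction | omega
      · rw [hdj z, hzv] at hw2
        split_ifs at hw2 <;> first | contradiction | omega
  · -- cost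
    have hsplit : f = fun x => (if x = 0 then k - 1 else 0) + (if x = j then k - 1 else 0) := by
      funext x
      by_cases h1 : x = 0
      · subst h1; simp [hf, h0j]
      · by_cases h2 : x = j <;> simp [hf, h1, h2, Ne.symm h0j]
    show (∑ v, f v) = 2 * (k - 1)
    rw [hsplit, Finset.sum_add_distrib]
    rw [Finset.sum_ite_eq' Finset.univ (0 : Fin n) (fun _ => k - 1),
      Finset.sum_ite_eq' Finset.univ j (fun _ => k - 1)]
    simp
    omega

end CycleAux

open Broadcast in
/-- For every integer n ≥ 4, Γ_b(C_n) = 2(⌊n/2⌋ − 1). -/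
theorem upperBroadcastDomination_cycleGraph (n : ℕ) (hn : 4 ≤ n) :
    upperBroadcastDomination (SimpleGraph.cycleGraph n) = 2 * (n / 2 - 1) := by
  classical
  haveI : NeZero n := ⟨by omega⟩
  have hn2 : 2 ≤ n := by omega
  have hconn : (SimpleGraph.cycleGraph n).Connected := by
    obtain ⟨m, rfl⟩ : ∃ m, n = m + 1 := ⟨n - 1, by omega⟩
    exact SimpleGraph.cycleGraph_connected
  have hub : ∀ c ∈ {c | ∃ f, IsMinimalDominating (SimpleGraph.cycleGraph n) f ∧ cost f = c},
      c ≤ 2 * (n / 2 - 1) := by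
    rintro c ⟨f, hmin, rfl⟩
    set P := Finset.univ.filter fun v => 1 ≤ f v with hP
    have hPmem : ∀ v, v ∈ P ↔ 1 ≤ f v := by intro v; simp [hP]
    have hPne : P.Nonempty := by
      obtain ⟨v, hv1, -⟩ := hmin.1.2 0
      exact ⟨v, (hPmem v).2 hv1⟩
    have hcost : cost f = ∑ v ∈ P, f v := CycleAux.cost_eq_sum_filter f
    by_cases h1 : P.card = 1
    · obtain ⟨v, hv⟩ := Finset.card_eq_one.1 h1
      rw [hcost, hv, Finset.sum_singleton]
      have hb := hmin.1.1 v
      rw [CycleAux.ecc_cycle hn2] at hb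
      omega
    · have h2 : 2 ≤ P.card := by
        have := Finset.card_pos.2 hPne
        omega
      have hflt : ∀ v ∈ P, f v ≤ n / 2 - 1 := by
        intro v hv
        obtain ⟨w, hw, hwv⟩ := Finset.exists_mem_ne (s := P) (by omega) v
        have hlt := CycleAux.power_lt_ecc hmin hconn hwv ((hPmem w).1 hw) ((hPmem v).1 hv)
        rw [CycleAux.ecc_cycle hn2] at hlt
        omega
      by_cases h3 : P.card = 2
      · rw [hcost]
        calc ∑ v ∈ P, f v ≤ ∑ _v ∈ P, (n / 2 - 1) := Finset.sum_le_sum hflt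
          _ = 2 * (n / 2 - 1) := by rw [Finset.sum_const, h3, smul_eq_mul]
      · have h4 : 3 ≤ P.card := by omega
        have hle := CycleAux.cost_add_card_le hn2 hmin
        rw [← hP] at hle
        omega
  have hmem : 2 * (n / 2 - 1) ∈
      {c | ∃ f, IsMinimalDominating (SimpleGraph.cycleGraph n) f ∧ cost f = c} := by
    obtain ⟨f, h1, h2⟩ := CycleAux.exists_min_dom hn
    exact ⟨f, h1, h2⟩
  show sSup {c | ∃ f, IsMinimalDominating (SimpleGraph.cycleGraph n) f ∧ cost f = c}
      = 2 * (n / 2 - 1)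
  exact le_antisymm (csSup_le ⟨_, hmem⟩ hub) (le_csSup ⟨2 * (n / 2 - 1), hub⟩ hmem)
end

section
/- For every integer n ≥ 3, the broadcast domination numbers of the cycle C_n and of the path P_n coincide and equal ⌈n/3⌉, i.e. γ_b(C_n) = γ_b(P_n) = ⌈n/3⌉. -/
open SimpleGraph

namespace BPf

open Broadcast SimpleGraph Finset
open scoped Classical

/-- Standard dominating broadcast pattern on `Fin n`. -/
def stdf (n : ℕ) (v : Fin n) : ℕ :=
  (if v.val % 3 = 1 then 1 else 0) + (if v.val + 1 = n ∧ n % 3 = 1 then 1 else 0)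

lemma stdf_le_one {n : ℕ} (v : Fin n) : stdf n v ≤ 1 := by
  unfold stdf; split_ifs <;> omega

lemma sum_mod3 (m : ℕ) :
    (∑ i ∈ Finset.range m, if i % 3 = 1 then (1:ℕ) else 0) = (m + 1) / 3 := by
  induction m with
  | zero => simp
  | succ m ih => rw [Finset.sum_range_succ, ih]; split_ifs <;> omega

lemma cost_stdf_le {n : ℕ} (hn : 3 ≤ n) : cost (stdf n) ≤ (n + 2) / 3 := by
  unfold cost stdf
  rw [Fin.sum_univ_eq_sum_range (fun i => (if i % 3 = 1 then 1 else 0)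
    + (if i + 1 = n ∧ n % 3 = 1 then 1 else 0)), Finset.sum_add_distrib, sum_mod3]
  have h2 : (∑ i ∈ Finset.range n, if i + 1 = n ∧ n % 3 = 1 then (1:ℕ) else 0)
      = if n % 3 = 1 then 1 else 0 := by
    rw [Finset.sum_congr rfl
      (g := fun i => if i = n - 1 then (if n % 3 = 1 then (1:ℕ) else 0) else 0)
      (fun i hi => by
        simp only [Finset.mem_range] at hi
        show _ = if i = n - 1 then (if n % 3 = 1 then (1:ℕ) else 0) else 0
        split_ifs <;> omega),
      Finset.sum_ite_eq' (Finset.range n) (n-1)]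
    simp only [Finset.mem_range, if_pos (by omega : n - 1 < n)]
  rw [h2]; split_ifs <;> omega

lemma one_le_ecc {V : Type*} [Fintype V] {G : SimpleGraph V} {v u : V} (h : G.Adj v u) :
    1 ≤ ecc G v := by
  have h1 : G.dist v u = 1 := SimpleGraph.dist_eq_one_iff_adj.mpr h
  calc (1:ℕ) = G.dist v u := h1.symm
  _ ≤ ecc G v := Finset.le_sup (Finset.mem_univ u)

lemma stdf_dominating {n : ℕ} {G : SimpleGraph (Fin n)} (hn : 3 ≤ n)
    (hle : SimpleGraph.pathGraph n ≤ G) : IsDominating G (stdf n) := by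
  constructor
  · intro v
    refine le_trans (stdf_le_one v) ?_
    have hv := v.isLt
    rcases Nat.eq_zero_or_pos v.val with h0 | h0
    · refine one_le_ecc (u := ⟨1, by omega⟩) (hle ?_)
      rw [SimpleGraph.pathGraph_adj]; left; simp [h0]
    · refine one_le_ecc (u := ⟨v.val - 1, by omega⟩) (hle ?_)
      rw [SimpleGraph.pathGraph_adj]; right; simp; omega
  · intro u
    have hu := u.isLt
    have hdist : ∀ v : Fin n, (SimpleGraph.pathGraph n).Adj u v → G.dist u v ≤ 1 := by
      intro v hadj
      exact le_of_eq (SimpleGraph.dist_eq_one_iff_adj.mpr (hle hadj))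
    by_cases h1 : u.val % 3 = 1
    · refine ⟨u, ?_, ?_⟩
      · unfold stdf; rw [if_pos h1]; omega
      · rw [SimpleGraph.dist_self]; unfold stdf; rw [if_pos h1]; omega
    · by_cases h0 : u.val % 3 = 0
      · by_cases h2 : u.val + 1 < n
        · refine ⟨⟨u.val + 1, h2⟩, ?_, ?_⟩
          · unfold stdf; rw [if_pos (by omega : (u.val + 1) % 3 = 1)]; omega
          · have hs : 1 ≤ stdf n ⟨u.val + 1, h2⟩ := by
              unfold stdf; rw [if_pos (by omega : (u.val + 1) % 3 = 1)]; omega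
            refine le_trans (hdist _ ?_) hs
            rw [SimpleGraph.pathGraph_adj]; left; rfl
        · -- u is the last vertex and n % 3 = 1
          have hlast : u.val + 1 = n := by omega
          have hn1 : n % 3 = 1 := by omega
          refine ⟨u, ?_, ?_⟩
          · unfold stdf; rw [if_pos (show u.val + 1 = n ∧ n % 3 = 1 from ⟨hlast, hn1⟩)]; omega
          · rw [SimpleGraph.dist_self]; unfold stdf; rw [if_pos (show u.val + 1 = n ∧ n % 3 = 1 from ⟨hlast, hn1⟩)]; omega
      · -- u.val % 3 = 2
        refine ⟨⟨u.val - 1, by omega⟩, ?_, ?_⟩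
        · unfold stdf; rw [if_pos (by omega : (u.val - 1) % 3 = 1)]; omega
        · have hs : 1 ≤ stdf n ⟨u.val - 1, by omega⟩ := by
            unfold stdf; rw [if_pos (by omega : (u.val - 1) % 3 = 1)]; omega
          refine le_trans (hdist _ ?_) hs
          rw [SimpleGraph.pathGraph_adj]; right; simp; omega

lemma lower_bound {n : ℕ} {G : SimpleGraph (Fin n)} {f : Fin n → ℕ}
    (hball : ∀ (v : Fin n) (r : ℕ),
      (Finset.univ.filter (fun u => G.dist u v ≤ r)).card ≤ 2 * r + 1)
    (hf : IsDominating G f) : (n + 2) / 3 ≤ cost f := by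
  have key : n ≤ 3 * cost f := by
    have h1 : (Finset.univ : Finset (Fin n)) ⊆
        (Finset.univ.filter (fun v => 1 ≤ f v)).biUnion
          (fun v => Finset.univ.filter (fun u => G.dist u v ≤ f v)) := by
      intro u _
      obtain ⟨v, hv1, hv2⟩ := hf.2 u
      exact Finset.mem_biUnion.mpr ⟨v, Finset.mem_filter.mpr ⟨Finset.mem_univ v, hv1⟩,
        Finset.mem_filter.mpr ⟨Finset.mem_univ u, hv2⟩⟩
    calc n = (Finset.univ : Finset (Fin n)).card := (Finset.card_fin n).symm
    _ ≤ _ := Finset.card_le_card h1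
    _ ≤ ∑ v ∈ Finset.univ.filter (fun v => 1 ≤ f v),
          (Finset.univ.filter (fun u => G.dist u v ≤ f v)).card := Finset.card_biUnion_le
    _ ≤ ∑ v ∈ Finset.univ.filter (fun v => 1 ≤ f v), 3 * f v := by
        apply Finset.sum_le_sum
        intro v hv
        have hv1 : 1 ≤ f v := (Finset.mem_filter.mp hv).2
        have := hball v (f v)
        omega
    _ = 3 * ∑ v ∈ Finset.univ.filter (fun v => 1 ≤ f v), f v := by rw [Finset.mul_sum]
    _ ≤ 3 * cost f := by
        exact Nat.mul_le_mul_left 3 (Finset.sum_le_sum_of_subset (Finset.filter_subset _ _))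
  omega

lemma path_walk_bound {n : ℕ} {u v : Fin n} (W : (SimpleGraph.pathGraph n).Walk u v) :
    u.val ≤ v.val + W.length ∧ v.val ≤ u.val + W.length := by
  induction W with
  | nil => simp
  | @cons a b c h W ih =>
    rw [SimpleGraph.pathGraph_adj] at h
    rw [SimpleGraph.Walk.length_cons]
    omega

lemma path_ball {m : ℕ} (v : Fin (m+3)) (r : ℕ) :
    (Finset.univ.filter
      (fun u => (SimpleGraph.pathGraph (m+3)).dist u v ≤ r)).card ≤ 2 * r + 1 := by
  have hcard : (Finset.Icc (v.val - r) (v.val + r)).card ≤ 2 * r + 1 := by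
    rw [Nat.card_Icc]; omega
  refine le_trans (Finset.card_le_card_of_injOn (fun u => u.val) ?_
    (fun a _ b _ hab => Fin.ext hab)) hcard
  intro u hu
  simp only [Finset.coe_filter, Finset.mem_filter, Finset.mem_univ, true_and, Set.mem_setOf_eq] at hu
  obtain ⟨W, hW⟩ := (SimpleGraph.pathGraph_connected (m+2)).exists_walk_length_eq_dist u v
  have hW' : W.length = (SimpleGraph.pathGraph (m+3)).dist u v := hW
  have hb := path_walk_bound W
  rw [hW'] at hb
  simp only [Finset.coe_Icc, Finset.mem_coe, Finset.mem_Icc, Set.mem_Icc]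
  omega

open Fin.CommRing in
lemma cycle_walk_bound {m : ℕ} {u v : Fin (m+3)} (W : (SimpleGraph.cycleGraph (m+3)).Walk u v) :
    ∃ k : ℤ, k.natAbs ≤ W.length ∧ u = v + (k : Fin (m+3)) := by
  induction W with
  | nil => exact ⟨0, by simp⟩
  | @cons a b c h W ih =>
    obtain ⟨k, hk, hb⟩ := ih
    rw [SimpleGraph.cycleGraph_adj'] at h
    rw [SimpleGraph.Walk.length_cons]
    rcases h with h | h
    · have hab : a - b = 1 := Fin.ext (by rw [h]; simp [Fin.val_one])
      refine ⟨k + 1, by omega, ?_⟩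
      have ha : a = b + 1 := by rw [← hab]; ring
      rw [ha, hb]; push_cast; ring
    · have hab : b - a = 1 := Fin.ext (by rw [h]; simp [Fin.val_one])
      refine ⟨k - 1, by omega, ?_⟩
      have ha : a = b - 1 := by rw [← hab]; ring
      rw [ha, hb]; push_cast; ring

open Fin.CommRing in
lemma cycle_ball {m : ℕ} (v : Fin (m+3)) (r : ℕ) :
    (Finset.univ.filter
      (fun u => (SimpleGraph.cycleGraph (m+3)).dist u v ≤ r)).card ≤ 2 * r + 1 := by
  have hsub : Finset.univ.filter
      (fun u : Fin (m+3) => (SimpleGraph.cycleGraph (m+3)).dist u v ≤ r)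
      ⊆ (Finset.Icc (-(r:ℤ)) r).image (fun k : ℤ => v + (k : Fin (m+3))) := by
    intro u hu
    simp only [Finset.mem_filter, Finset.mem_univ, true_and] at hu
    obtain ⟨W, hW⟩ :=
      (SimpleGraph.cycleGraph_connected (n := m+2)).exists_walk_length_eq_dist u v
    have hW' : W.length = (SimpleGraph.cycleGraph (m+3)).dist u v := hW
    obtain ⟨k, hk, huv⟩ := cycle_walk_bound W
    rw [hW'] at hk
    refine Finset.mem_image.mpr ⟨k, Finset.mem_Icc.mpr (by omega : -(r:ℤ) ≤ k ∧ k ≤ r), huv.symm⟩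
  refine le_trans (Finset.card_le_card hsub) (le_trans Finset.card_image_le ?_)
  rw [Int.card_Icc]
  omega

end BPf

open Broadcast in
/-- For every integer n ≥ 3, γ_b(C_n) = γ_b(P_n) = ⌈n/3⌉. -/
theorem broadcastDomination_cycleGraph_eq_pathGraph (n : ℕ) (hn : 3 ≤ n) :
    broadcastDomination (SimpleGraph.cycleGraph n) =
      broadcastDomination (SimpleGraph.pathGraph n) ∧
    broadcastDomination (SimpleGraph.pathGraph n) = (n + 2) / 3 := by
  classical
  obtain ⟨m, rfl⟩ : ∃ m, n = m + 3 := ⟨n - 3, by omega⟩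
  have hn3 : 3 ≤ m + 3 := by omega
  have hdomP : IsDominating (SimpleGraph.pathGraph (m+3)) (BPf.stdf (m+3)) :=
    BPf.stdf_dominating hn3 le_rfl
  have hdomC : IsDominating (SimpleGraph.cycleGraph (m+3)) (BPf.stdf (m+3)) :=
    BPf.stdf_dominating hn3 SimpleGraph.pathGraph_le_cycleGraph
  have hcost : cost (BPf.stdf (m+3)) ≤ (m + 3 + 2) / 3 := BPf.cost_stdf_le hn3
  have hlbP : ∀ f, IsDominating (SimpleGraph.pathGraph (m+3)) f → (m + 3 + 2) / 3 ≤ cost f :=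
    fun f hf => BPf.lower_bound (fun v r => BPf.path_ball v r) hf
  have hlbC : ∀ f, IsDominating (SimpleGraph.cycleGraph (m+3)) f → (m + 3 + 2) / 3 ≤ cost f :=
    fun f hf => BPf.lower_bound (fun v r => BPf.cycle_ball v r) hf
  have hP : broadcastDomination (SimpleGraph.pathGraph (m+3)) = (m + 3 + 2) / 3 := by
    apply le_antisymm
    · exact le_trans (Nat.sInf_le ⟨_, hdomP, rfl⟩) hcost
    · have hne : {c | ∃ f, IsDominating (SimpleGraph.pathGraph (m+3)) f ∧ cost f = c}.Nonempty :=
        ⟨_, _, hdomP, rfl⟩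
      obtain ⟨f, hf, hc⟩ := Nat.sInf_mem hne
      rw [broadcastDomination, ← hc]
      exact hlbP f hf
  have hC : broadcastDomination (SimpleGraph.cycleGraph (m+3)) = (m + 3 + 2) / 3 := by
    apply le_antisymm
    · exact le_trans (Nat.sInf_le ⟨_, hdomC, rfl⟩) hcost
    · have hne : {c | ∃ f, IsDominating (SimpleGraph.cycleGraph (m+3)) f ∧ cost f = c}.Nonempty :=
        ⟨_, _, hdomC, rfl⟩
      obtain ⟨f, hf, hc⟩ := Nat.sInf_mem hne
      rw [broadcastDomination, ← hc]
      exact hlbC f hf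
  exact ⟨hC.trans hP.symm, hP⟩
end

section
/- Let f be a maximal irredundant broadcast on the path P_n. If H_f(x_i) = ∅ for some vertex x_i, then some neighbor of x_i hears an f-broadcast vertex, i.e. N(x_i) ∩ N_f(V_f^+) ≠ ∅, where N_f(V_f^+) is the set of all vertices u with H_f(u) ≠ ∅. -/
open SimpleGraph

section Aux
open Broadcast SimpleGraph

theorem aux_main (n : ℕ) (hn : 2 ≤ n)
    (f : Fin n → ℕ) (hf : IsMaximalIrredundant (SimpleGraph.pathGraph n) f)
    (i : Fin n) (hi : hears (SimpleGraph.pathGraph n) f i = ∅) :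
    ∃ u : Fin n, (SimpleGraph.pathGraph n).Adj i u ∧
      hears (SimpleGraph.pathGraph n) f u ≠ ∅ := by
  by_contra hcon
  push_neg at hcon
  set G := SimpleGraph.pathGraph n with hG
  obtain ⟨m, rfl⟩ : ∃ m, n = m + 1 := ⟨n - 1, by omega⟩
  have hGconn : G.Connected := SimpleGraph.pathGraph_connected m
  -- f i = 0
  have hfi : f i = 0 := by
    by_contra h0
    have : i ∈ hears G f i :=
      ⟨Nat.one_le_iff_ne_zero.mpr h0, by rw [SimpleGraph.dist_self]; omega⟩
    rw [hi] at this
    exact this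
  -- any vertex hearing something is far from i
  have hfar : ∀ w : Fin (m+1), (hears G f w).Nonempty → ¬ (G.dist w i ≤ 1) := by
    intro w hw hle
    interval_cases h : G.dist w i
    · have : w = i := (hGconn.dist_eq_zero_iff).mp h
      subst this
      rw [hi] at hw
      exact hw.ne_empty rfl
    · have hadj : G.Adj w i := SimpleGraph.dist_eq_one_iff_adj.mp h
      have := hcon w hadj.symm
      rw [this] at hw
      exact hw.ne_empty rfl
  set g : Fin (m+1) → ℕ := Function.update f i 1 with hg
  have hgi : g i = 1 := Function.update_self i 1 f
  have hgv : ∀ v, v ≠ i → g v = f v := fun v hv => Function.update_of_ne hv 1 f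
  have hge : ∀ v, f v ≤ g v := by
    intro v
    by_cases hv : v = i
    · subst hv; rw [hgi, hfi]; omega
    · rw [hgv v hv]
  -- hears under g
  have hmem : ∀ (h : Fin (m+1) → ℕ) (w v : Fin (m+1)),
      v ∈ hears G h w ↔ 1 ≤ h v ∧ G.dist w v ≤ h v := fun _ _ _ => Iff.rfl
  have hheari : ∀ w v, v ∈ hears G g w → v ≠ i → v ∈ hears G f w := by
    intro w v hv hne
    obtain ⟨h1, h2⟩ := hv
    rw [hgv v hne] at h1 h2
    exact ⟨h1, h2⟩
  have hghear : ∀ w, (hears G f w).Nonempty → hears G g w = hears G f w := by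
    intro w hw
    ext v
    constructor
    · intro hv
      by_cases hvi : v = i
      · subst hvi
        obtain ⟨_, h2⟩ := hv
        rw [hgi] at h2
        exact absurd h2 (hfar w hw)
      · exact hheari w v hv hvi
    · intro hv
      exact ⟨le_trans hv.1 (hge v), le_trans hv.2 (hge v)⟩
  have hhgi : hears G g i = {i} := by
    ext v
    constructor
    · intro hv
      by_cases hvi : v = i
      · exact hvi
      · have := hheari i v hv hvi
        rw [hi] at this
        exact absurd this (Set.notMem_empty v)
    · intro hv
      rw [Set.mem_singleton_iff] at hv
      subst hv
      exact ⟨by rw [hgi], by rw [SimpleGraph.dist_self, hgi]; omega⟩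
  -- g is a broadcast
  have hgb : IsBroadcast G g := by
    intro v
    by_cases hv : v = i
    · subst hv
      rw [hgi]
      haveI : Nontrivial (Fin (m+1)) := by
        refine ⟨⟨0, ⟨1, by omega⟩, ?_⟩⟩
        intro h
        have := congrArg Fin.val h
        simp at this
      obtain ⟨j, hj⟩ := exists_ne v
      have hd : 1 ≤ G.dist v j := hGconn.pos_dist_of_ne (Ne.symm hj)
      calc 1 ≤ G.dist v j := hd
        _ ≤ ecc G v := Finset.le_sup (Finset.mem_univ j)
    · rw [hgv v hv]
      exact hf.1.1 v
  -- g is irredundant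
  have hgirr : IsIrredundant G g := by
    refine ⟨hgb, ?_⟩
    intro v hv1
    by_cases hvi : v = i
    · subst hvi
      have hiPN : v ∈ privateNbhd G g v := hhgi
      unfold privateBorder
      split_ifs with hc
      · exact ⟨v, rfl⟩
      · push_neg at hc
        have hPNne : privateNbhd G g v ≠ {v} := hc hgi
        have hss : {v} ⊂ privateNbhd G g v := by
          refine ⟨?_, fun h => hPNne (le_antisymm (fun u hu => h hu) (by simpa using hiPN))⟩
          intro u hu
          rw [Set.mem_singleton_iff] at hu
          subst hu; exact hiPN
        obtain ⟨u, hu, hune⟩ := Set.exists_of_ssubset hss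
        rw [Set.mem_singleton_iff] at hune
        refine ⟨u, hu, ?_⟩
        have hu' : v ∈ hears G g u := by rw [hu]; rfl
        have h2 := hu'.2
        rw [hgi] at h2 ⊢
        have : 1 ≤ G.dist u v := hGconn.pos_dist_of_ne hune
        omega
    · have hfv1 : 1 ≤ f v := by rw [← hgv v hvi]; exact hv1
      -- PN_g v ⊆ PN_f v
      have hPNsub : privateNbhd G g v ⊆ privateNbhd G f v := by
        intro w hw
        have hw' : hears G g w = {v} := hw
        have hvw : v ∈ hears G g w := by rw [hw']; rfl
        have hvfw : v ∈ hears G f w := hheari w v hvw hvi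
        have heq : hears G g w = hears G f w := hghear w ⟨v, hvfw⟩
        show hears G f w = {v}
        rw [← heq]; exact hw'
      have hPNsup : privateNbhd G f v ⊆ privateNbhd G g v := by
        intro w hw
        have hw' : hears G f w = {v} := hw
        have hvfw : v ∈ hears G f w := by rw [hw']; rfl
        have heq : hears G g w = hears G f w := hghear w ⟨v, hvfw⟩
        show hears G g w = {v}
        rw [heq]; exact hw'
      have hPNeq : privateNbhd G g v = privateNbhd G f v :=
        le_antisymm hPNsub hPNsup
      obtain ⟨u, hu⟩ := hf.1.2 v hfv1
      unfold privateBorder at hu ⊢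
      rw [hgv v hvi, hPNeq]
      split_ifs at hu ⊢ with h1
      · exact ⟨u, hu⟩
      · exact ⟨u, hu⟩
  have := hf.2 g hgirr hge
  have : g i = f i := by rw [this]
  rw [hgi, hfi] at this
  exact absurd this one_ne_zero
end Aux

open Broadcast in
/-- If f is a maximal irredundant broadcast on P_n and H_f(x_i) = ∅,
then some neighbor of x_i hears an f-broadcast vertex. -/
theorem neighbor_hears_of_maximal_irredundant_pathGraph (n : ℕ) (hn : 2 ≤ n)
    (f : Fin n → ℕ) (hf : IsMaximalIrredundant (SimpleGraph.pathGraph n) f)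
    (i : Fin n) (hi : hears (SimpleGraph.pathGraph n) f i = ∅) :
    ∃ u : Fin n, (SimpleGraph.pathGraph n).Adj i u ∧
      hears (SimpleGraph.pathGraph n) f u ≠ ∅ := by
  obtain ⟨u, h1, h2⟩ := aux_main n hn f hf i hi
  exact ⟨u, h1, h2⟩
end
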